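/- arXiv:1603.00631 — 4 statements merged into one kernel-verified Lean document; each statement's English description precedes it below -/
import Mathlib

section
/- Let φ be a Schwartz function on ℝ and set ψ(s) := φ(s) − 2φ(2s). For m ∈ ℕ define the truncated triangular Hilbert transform T_m(F,G)(x,y) := Σ_{j=1}^{m} ∫_ℝ F(x+s,y) G(x,y+s) 2^{-j} ψ(2^{-j}s) ds. Then there is a finite constant C_ψ depending only on ψ such that for all F, G ∈ L⁴(ℝ²) and all m ∈ ℕ, ‖T_m(F,G)‖_{L²(ℝ²)} ≤ C_ψ m^{1/2} ‖F‖_{L⁴(ℝ²)} ‖G‖_{L⁴(ℝ²)}. -/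
open MeasureTheory
open scoped ENNReal NNReal

/-- The dilate `φ_t(s) = t⁻¹ φ(t⁻¹ s)` of a function `φ : ℝ → ℂ`. -/
noncomputable def dil (φ : ℝ → ℂ) (t : ℝ) (s : ℝ) : ℂ :=
  (t : ℂ)⁻¹ * φ (t⁻¹ * s)


lemma mink2 {α β : Type*} [MeasurableSpace α] [MeasurableSpace β]
    (μ : Measure α) (ν : Measure β) [SFinite μ] [SFinite ν]
    {f : α → β → ℝ≥0∞} (hf : Measurable (Function.uncurry f)) :
    (∫⁻ x, (∫⁻ y, f x y ∂ν) ^ (2:ℝ) ∂μ) ^ (1/2:ℝ) ≤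
      ∫⁻ y, (∫⁻ x, (f x y) ^ (2:ℝ) ∂μ) ^ (1/2:ℝ) ∂ν := by
  have hfx : ∀ x, Measurable (f x) := fun x => hf.comp measurable_prodMk_left
  have hfy : ∀ y, Measurable (fun x => f x y) :=
    fun y => hf.comp (measurable_id.prodMk measurable_const)
  set I : β → ℝ≥0∞ := fun y => (∫⁻ x, (f x y) ^ (2:ℝ) ∂μ) ^ (1/2:ℝ) with hIdef
  have hI : Measurable I := (Measurable.lintegral_prod_left (hf.pow_const _)).pow_const _
  -- g x y = ∫⁻ y', f x y * f x y'
  set g : α → β → ℝ≥0∞ := fun x y => ∫⁻ y', f x y * f x y' ∂ν with hgdef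
  have hg : Measurable (Function.uncurry g) := by
    apply Measurable.lintegral_prod_right'
      (f := fun w : (α × β) × β => f w.1.1 w.1.2 * f w.1.1 w.2)
    exact (hf.comp (measurable_fst.fst.prodMk measurable_fst.snd)).mul
      (hf.comp (measurable_fst.fst.prodMk measurable_snd))
  have e1 : ∀ x, (∫⁻ y, f x y ∂ν) ^ (2:ℝ) = ∫⁻ y, g x y ∂ν := by
    intro x
    rw [ENNReal.rpow_two, sq, ← lintegral_mul_const'' _ (hfx x).aemeasurable]
    exact lintegral_congr fun y => (lintegral_const_mul'' (f x y) (hfx x).aemeasurable).symm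
  calc (∫⁻ x, (∫⁻ y, f x y ∂ν) ^ (2:ℝ) ∂μ) ^ (1/2:ℝ)
      = (∫⁻ x, ∫⁻ y, g x y ∂ν ∂μ) ^ (1/2:ℝ) := by rw [lintegral_congr e1]
    _ = (∫⁻ y, ∫⁻ x, g x y ∂μ ∂ν) ^ (1/2:ℝ) := by
        rw [lintegral_lintegral_swap hg.aemeasurable]
    _ = (∫⁻ y, ∫⁻ y', ∫⁻ x, f x y * f x y' ∂μ ∂ν ∂ν) ^ (1/2:ℝ) := by
        congr 1
        refine lintegral_congr fun y => ?_
        refine lintegral_lintegral_swap (Measurable.aemeasurable ?_)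
        exact (hf.comp (measurable_fst.prodMk measurable_const)).mul
          (hf.comp (measurable_fst.prodMk measurable_snd))
    _ ≤ (∫⁻ y, ∫⁻ y', I y * I y' ∂ν ∂ν) ^ (1/2:ℝ) := by
        apply ENNReal.rpow_le_rpow _ (by norm_num)
        refine lintegral_mono fun y => lintegral_mono fun y' => ?_
        have := ENNReal.lintegral_mul_le_Lp_mul_Lq μ
          (Real.HolderConjugate.two_two)
          (hfy y).aemeasurable (hfy y').aemeasurable
        have h2 : I y * I y' = (∫⁻ a, f a y ^ (2:ℝ) ∂μ) ^ (1/2:ℝ) *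
            (∫⁻ a, f a y' ^ (2:ℝ) ∂μ) ^ (1/2:ℝ) := rfl
        rw [h2]
        exact le_trans (le_of_eq (lintegral_congr fun x => rfl)) this
    _ = ((∫⁻ y, I y ∂ν) * (∫⁻ y, I y ∂ν)) ^ (1/2:ℝ) := by
        congr 1
        rw [← lintegral_mul_const'' _ hI.aemeasurable]
        exact lintegral_congr fun y => lintegral_const_mul'' (I y) hI.aemeasurable
    _ = ∫⁻ y, I y ∂ν := by
        rw [← sq, ← ENNReal.rpow_two, ← ENNReal.rpow_mul]
        norm_num

lemma pow4 (x : ℝ≥0∞) : (x ^ (2:ℝ)) ^ (2:ℝ) = x ^ (4:ℝ) := by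
  rw [← ENNReal.rpow_mul]; norm_num

lemma single_scale {F G : ℝ × ℝ → ℂ} (hF : StronglyMeasurable F) (hG : StronglyMeasurable G)
    {w : ℝ → ℂ} (hw : Measurable w) :
    eLpNorm (fun p : ℝ × ℝ => ∫ s : ℝ, F (p.1 + s, p.2) * G (p.1, p.2 + s) * w s) 2 volume
      ≤ (∫⁻ s, (‖w s‖₊ : ℝ≥0∞)) * eLpNorm F 4 volume * eLpNorm G 4 volume := by
  set a : ℝ → (ℝ × ℝ) → ℝ≥0∞ := fun s p => (‖F (p.1 + s, p.2)‖₊ : ℝ≥0∞) with hadef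
  set b : ℝ → (ℝ × ℝ) → ℝ≥0∞ := fun s p => (‖G (p.1, p.2 + s)‖₊ : ℝ≥0∞) with hbdef
  set c : ℝ → ℝ≥0∞ := fun s => (‖w s‖₊ : ℝ≥0∞) with hcdef
  have hτ : ∀ s : ℝ, Measurable (fun p : ℝ × ℝ => (p.1 + s, p.2)) :=
    fun s => (measurable_fst.add_const s).prodMk measurable_snd
  have hσ : ∀ s : ℝ, Measurable (fun p : ℝ × ℝ => (p.1, p.2 + s)) :=
    fun s => measurable_fst.prodMk (measurable_snd.add_const s)
  have hc : Measurable c := hw.nnnorm.coe_nnreal_ennreal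
  have ha : ∀ s, Measurable (a s) := fun s =>
    ((hF.measurable.comp (hτ s)).nnnorm).coe_nnreal_ennreal
  have hb : ∀ s, Measurable (b s) := fun s =>
    ((hG.measurable.comp (hσ s)).nnnorm).coe_nnreal_ennreal
  set h : (ℝ × ℝ) → ℝ → ℝ≥0∞ := fun p s => a s p * b s p * c s with hhdef
  have hh : Measurable (Function.uncurry h) := by
    show Measurable fun z : (ℝ × ℝ) × ℝ => a z.2 z.1 * b z.2 z.1 * c z.2
    apply Measurable.fun_mul
    apply Measurable.fun_mul
    · exact (hF.measurable.comp
        ((measurable_fst.fst.add measurable_snd).prodMk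
          measurable_fst.snd)).nnnorm.coe_nnreal_ennreal
    · exact (hG.measurable.comp
        (measurable_fst.fst.prodMk
          (measurable_fst.snd.add measurable_snd))).nnnorm.coe_nnreal_ennreal
    · exact (hw.comp measurable_snd).nnnorm.coe_nnreal_ennreal
  have eF : eLpNorm F 4 volume = (∫⁻ q, (‖F q‖₊ : ℝ≥0∞) ^ (4:ℝ)) ^ (1/4:ℝ) := by
    rw [eLpNorm_eq_lintegral_rpow_enorm_toReal (by norm_num) (by norm_num)]
    norm_num
    rfl
  have eG : eLpNorm G 4 volume = (∫⁻ q, (‖G q‖₊ : ℝ≥0∞) ^ (4:ℝ)) ^ (1/4:ℝ) := by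
    rw [eLpNorm_eq_lintegral_rpow_enorm_toReal (by norm_num) (by norm_num)]
    norm_num
    rfl
  have mpa : ∀ s : ℝ, MeasurePreserving (fun p : ℝ × ℝ => (p.1 + s, p.2)) volume volume := by
    intro s
    rw [Measure.volume_eq_prod]
    exact (measurePreserving_add_right volume s).prod (MeasurePreserving.id volume)
  have mpb : ∀ s : ℝ, MeasurePreserving (fun p : ℝ × ℝ => (p.1, p.2 + s)) volume volume := by
    intro s
    rw [Measure.volume_eq_prod]
    exact (MeasurePreserving.id volume).prod (measurePreserving_add_right volume s)
  have ia : ∀ s, ∫⁻ p, a s p ^ (4:ℝ) ∂volume = ∫⁻ q, (‖F q‖₊ : ℝ≥0∞) ^ (4:ℝ) := fun s =>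
    (mpa s).lintegral_comp (hF.measurable.nnnorm.coe_nnreal_ennreal.pow_const _)
  have ib : ∀ s, ∫⁻ p, b s p ^ (4:ℝ) ∂volume = ∫⁻ q, (‖G q‖₊ : ℝ≥0∞) ^ (4:ℝ) := fun s =>
    (mpb s).lintegral_comp (hG.measurable.nnnorm.coe_nnreal_ennreal.pow_const _)
  have step2 : ∀ s : ℝ, (∫⁻ p, h p s ^ (2:ℝ) ∂volume) ^ (1/2:ℝ)
      ≤ c s * eLpNorm F 4 volume * eLpNorm G 4 volume := by
    intro s
    have holder := ENNReal.lintegral_mul_le_Lp_mul_Lq (volume : Measure (ℝ × ℝ))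
      (Real.HolderConjugate.two_two)
      ((ha s).pow_const (2:ℝ)).aemeasurable ((hb s).pow_const (2:ℝ)).aemeasurable
    have hab : ∫⁻ p, (a s p ^ (2:ℝ)) * (b s p ^ (2:ℝ)) ∂volume
        ≤ (∫⁻ p, a s p ^ (4:ℝ) ∂volume) ^ (1/2:ℝ) *
          (∫⁻ p, b s p ^ (4:ℝ) ∂volume) ^ (1/2:ℝ) := by
      refine le_trans (le_of_eq rfl) (holder.trans (le_of_eq ?_))
      have e1 : ∫⁻ p, (a s p ^ (2:ℝ)) ^ (2:ℝ) ∂volume = ∫⁻ p, a s p ^ (4:ℝ) ∂volume :=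
        lintegral_congr fun p => pow4 _
      have e2 : ∫⁻ p, (b s p ^ (2:ℝ)) ^ (2:ℝ) ∂volume = ∫⁻ p, b s p ^ (4:ℝ) ∂volume :=
        lintegral_congr fun p => pow4 _
      rw [e1, e2]
    calc (∫⁻ p, h p s ^ (2:ℝ) ∂volume) ^ (1/2:ℝ)
        = (c s ^ (2:ℝ) * ∫⁻ p, (a s p ^ (2:ℝ)) * (b s p ^ (2:ℝ)) ∂volume) ^ (1/2:ℝ) := by
          rw [← lintegral_const_mul'' _
            (((ha s).pow_const _).fun_mul ((hb s).pow_const _)).aemeasurable]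
          congr 1
          refine lintegral_congr fun p => ?_
          rw [hhdef]
          simp only
          rw [ENNReal.mul_rpow_of_nonneg _ _ (by norm_num : (0:ℝ) ≤ 2),
            ENNReal.mul_rpow_of_nonneg _ _ (by norm_num : (0:ℝ) ≤ 2)]
          ring
      _ ≤ (c s ^ (2:ℝ) * ((∫⁻ p, a s p ^ (4:ℝ) ∂volume) ^ (1/2:ℝ) *
            (∫⁻ p, b s p ^ (4:ℝ) ∂volume) ^ (1/2:ℝ))) ^ (1/2:ℝ) :=
          ENNReal.rpow_le_rpow (mul_le_mul_right hab _) (by norm_num)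
      _ = c s * eLpNorm F 4 volume * eLpNorm G 4 volume := by
          rw [ia, ib, eF, eG,
            ENNReal.mul_rpow_of_nonneg _ _ (by norm_num : (0:ℝ) ≤ 1/2),
            ENNReal.mul_rpow_of_nonneg _ _ (by norm_num : (0:ℝ) ≤ 1/2),
            ← ENNReal.rpow_mul, ← ENNReal.rpow_mul, ← ENNReal.rpow_mul]
          norm_num [mul_assoc]
  calc eLpNorm (fun p : ℝ × ℝ => ∫ s : ℝ, F (p.1 + s, p.2) * G (p.1, p.2 + s) * w s) 2 volume
      = (∫⁻ p : ℝ × ℝ, (‖∫ s : ℝ, F (p.1 + s, p.2) * G (p.1, p.2 + s) * w s‖₊ : ℝ≥0∞) ^ (2:ℝ)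
          ∂volume) ^ (1/2:ℝ) := by
        rw [eLpNorm_eq_lintegral_rpow_enorm_toReal (by norm_num) (by norm_num)]
        norm_num
        rfl
    _ ≤ (∫⁻ p : ℝ × ℝ, (∫⁻ s : ℝ, h p s) ^ (2:ℝ) ∂volume) ^ (1/2:ℝ) := by
        refine ENNReal.rpow_le_rpow (lintegral_mono fun p => ?_) (by norm_num)
        refine ENNReal.rpow_le_rpow ?_ (by norm_num)
        refine le_trans (enorm_integral_le_lintegral_enorm _) (le_of_eq ?_)
        refine lintegral_congr fun s => ?_
        simp [hhdef, hadef, hbdef, hcdef, nnnorm_mul, ENNReal.coe_mul, enorm_eq_nnnorm]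
    _ ≤ ∫⁻ s : ℝ, (∫⁻ p : ℝ × ℝ, h p s ^ (2:ℝ) ∂volume) ^ (1/2:ℝ) := mink2 volume volume hh
    _ ≤ ∫⁻ s : ℝ, c s * eLpNorm F 4 volume * eLpNorm G 4 volume := lintegral_mono step2
    _ = (∫⁻ s, (‖w s‖₊ : ℝ≥0∞)) * eLpNorm F 4 volume * eLpNorm G 4 volume := by
        rw [lintegral_mul_const'' _ ((hc.mul_const _).aemeasurable),
          lintegral_mul_const'' _ hc.aemeasurable]

lemma mpa (s : ℝ) : MeasurePreserving (fun p : ℝ × ℝ => (p.1 + s, p.2)) volume volume := by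
  rw [Measure.volume_eq_prod]
  exact (measurePreserving_add_right volume s).prod (MeasurePreserving.id volume)

lemma mpb (s : ℝ) : MeasurePreserving (fun p : ℝ × ℝ => (p.1, p.2 + s)) volume volume := by
  rw [Measure.volume_eq_prod]
  exact (MeasurePreserving.id volume).prod (measurePreserving_add_right volume s)

lemma ae_shift_fst {F F' : ℝ × ℝ → ℂ} (h : F =ᵐ[volume] F') :
    ∀ᵐ p : ℝ × ℝ ∂volume, ∀ᵐ s : ℝ ∂volume, F (p.1 + s, p.2) = F' (p.1 + s, p.2) := by
  obtain ⟨N, hsub, hmeas, hnull⟩ := exists_measurable_superset_of_null h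
  have hu : Measurable fun z : (ℝ × ℝ) × ℝ => (z.1.1 + z.2, z.1.2) :=
    (measurable_fst.fst.add measurable_snd).prodMk measurable_fst.snd
  have key : (volume : Measure ((ℝ × ℝ) × ℝ))
      ((fun z : (ℝ × ℝ) × ℝ => (z.1.1 + z.2, z.1.2)) ⁻¹' N) = 0 := by
    rw [Measure.volume_eq_prod, Measure.prod_apply_symm (hu hmeas)]
    have e : ∀ s : ℝ, (volume : Measure (ℝ × ℝ))
        ((fun p : ℝ × ℝ => (p, s)) ⁻¹' ((fun z : (ℝ × ℝ) × ℝ => (z.1.1 + z.2, z.1.2)) ⁻¹' N))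
          = 0 := by
      intro s
      have : ((fun p : ℝ × ℝ => (p, s)) ⁻¹'
          ((fun z : (ℝ × ℝ) × ℝ => (z.1.1 + z.2, z.1.2)) ⁻¹' N))
            = (fun p : ℝ × ℝ => (p.1 + s, p.2)) ⁻¹' N := rfl
      rw [this, (mpa s).measure_preimage hmeas.nullMeasurableSet]
      exact hnull
    rw [lintegral_congr e, lintegral_zero]
  have hz : ∀ᵐ z : (ℝ × ℝ) × ℝ ∂volume,
      F (z.1.1 + z.2, z.1.2) = F' (z.1.1 + z.2, z.1.2) := by
    rw [ae_iff]
    refine measure_mono_null (fun z hz => ?_) key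
    exact hsub hz
  rw [Measure.volume_eq_prod] at hz
  exact Measure.ae_ae_of_ae_prod hz

lemma ae_shift_snd {G G' : ℝ × ℝ → ℂ} (h : G =ᵐ[volume] G') :
    ∀ᵐ p : ℝ × ℝ ∂volume, ∀ᵐ s : ℝ ∂volume, G (p.1, p.2 + s) = G' (p.1, p.2 + s) := by
  obtain ⟨N, hsub, hmeas, hnull⟩ := exists_measurable_superset_of_null h
  have hu : Measurable fun z : (ℝ × ℝ) × ℝ => (z.1.1, z.1.2 + z.2) :=
    measurable_fst.fst.prodMk (measurable_fst.snd.add measurable_snd)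
  have key : (volume : Measure ((ℝ × ℝ) × ℝ))
      ((fun z : (ℝ × ℝ) × ℝ => (z.1.1, z.1.2 + z.2)) ⁻¹' N) = 0 := by
    rw [Measure.volume_eq_prod, Measure.prod_apply_symm (hu hmeas)]
    have e : ∀ s : ℝ, (volume : Measure (ℝ × ℝ))
        ((fun p : ℝ × ℝ => (p, s)) ⁻¹' ((fun z : (ℝ × ℝ) × ℝ => (z.1.1, z.1.2 + z.2)) ⁻¹' N))
          = 0 := by
      intro s
      have : ((fun p : ℝ × ℝ => (p, s)) ⁻¹'
          ((fun z : (ℝ × ℝ) × ℝ => (z.1.1, z.1.2 + z.2)) ⁻¹' N))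
            = (fun p : ℝ × ℝ => (p.1, p.2 + s)) ⁻¹' N := rfl
      rw [this, (mpb s).measure_preimage hmeas.nullMeasurableSet]
      exact hnull
    rw [lintegral_congr e, lintegral_zero]
  have hz : ∀ᵐ z : (ℝ × ℝ) × ℝ ∂volume,
      G (z.1.1, z.1.2 + z.2) = G' (z.1.1, z.1.2 + z.2) := by
    rw [ae_iff]
    refine measure_mono_null (fun z hz => ?_) key
    exact hsub hz
  rw [Measure.volume_eq_prod] at hz
  exact Measure.ae_ae_of_ae_prod hz

lemma slice_fst {F : ℝ × ℝ → ℂ} (hF : StronglyMeasurable F) (h4 : MemLp F 4 volume) :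
    ∀ᵐ p : ℝ × ℝ ∂volume, MemLp (fun s => F (p.1 + s, p.2)) 4 volume := by
  have hm : Measurable fun q : ℝ × ℝ => (‖F q‖₊ : ℝ≥0∞) ^ (4:ℝ) :=
    hF.measurable.nnnorm.coe_nnreal_ennreal.pow_const _
  have hfin : (∫⁻ q : ℝ × ℝ, (‖F q‖₊ : ℝ≥0∞) ^ (4:ℝ) ∂volume) < ∞ := by
    have := lintegral_rpow_enorm_lt_top_of_eLpNorm_lt_top (f := F) (μ := volume)
      (by norm_num) (by norm_num) h4.2
    simpa [enorm_eq_nnnorm] using this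
  rw [Measure.volume_eq_prod, lintegral_prod_symm _ hm.aemeasurable] at hfin
  have hy : ∀ᵐ y : ℝ ∂volume, (∫⁻ x : ℝ, (‖F (x, y)‖₊ : ℝ≥0∞) ^ (4:ℝ)) < ∞ :=
    ae_lt_top (Measurable.lintegral_prod_left (f := fun x y => (‖F (x, y)‖₊ : ℝ≥0∞) ^ (4:ℝ)) hm)
      hfin.ne
  have hq : Measure.QuasiMeasurePreserving (Prod.snd : ℝ × ℝ → ℝ) volume volume := by
    rw [Measure.volume_eq_prod]; exact Measure.quasiMeasurePreserving_snd
  filter_upwards [hq.ae hy] with p hp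
  refine ⟨(hF.comp_measurable
    ((measurable_const.add measurable_id').prodMk measurable_const)).aestronglyMeasurable, ?_⟩
  rw [eLpNorm_eq_lintegral_rpow_enorm_toReal (by norm_num) (by norm_num)]
  have e : ∫⁻ s : ℝ, (‖F (p.1 + s, p.2)‖₊ : ℝ≥0∞) ^ ((4:ℝ≥0∞).toReal) =
      ∫⁻ x : ℝ, (‖F (x, p.2)‖₊ : ℝ≥0∞) ^ ((4:ℝ≥0∞).toReal) :=
    (measurePreserving_add_left volume p.1).lintegral_comp
      ((hF.measurable.comp (measurable_id'.prodMk measurable_const)).nnnorm.coe_nnreal_ennreal.pow_const _)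
  simp only [enorm_eq_nnnorm]
  rw [e]
  refine ENNReal.rpow_lt_top_of_nonneg (by norm_num) ?_
  simpa using hp.ne

lemma slice_snd {G : ℝ × ℝ → ℂ} (hG : StronglyMeasurable G) (h4 : MemLp G 4 volume) :
    ∀ᵐ p : ℝ × ℝ ∂volume, MemLp (fun s => G (p.1, p.2 + s)) 4 volume := by
  have hm : Measurable fun q : ℝ × ℝ => (‖G q‖₊ : ℝ≥0∞) ^ (4:ℝ) :=
    hG.measurable.nnnorm.coe_nnreal_ennreal.pow_const _
  have hfin : (∫⁻ q : ℝ × ℝ, (‖G q‖₊ : ℝ≥0∞) ^ (4:ℝ) ∂volume) < ∞ := by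
    have := lintegral_rpow_enorm_lt_top_of_eLpNorm_lt_top (f := G) (μ := volume)
      (by norm_num) (by norm_num) h4.2
    simpa [enorm_eq_nnnorm] using this
  rw [Measure.volume_eq_prod, lintegral_prod _ hm.aemeasurable] at hfin
  have hy : ∀ᵐ x : ℝ ∂volume, (∫⁻ y : ℝ, (‖G (x, y)‖₊ : ℝ≥0∞) ^ (4:ℝ)) < ∞ :=
    ae_lt_top (Measurable.lintegral_prod_right (f := fun x y => (‖G (x, y)‖₊ : ℝ≥0∞) ^ (4:ℝ)) hm)
      hfin.ne
  have hq : Measure.QuasiMeasurePreserving (Prod.fst : ℝ × ℝ → ℝ) volume volume := by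
    rw [Measure.volume_eq_prod]; exact Measure.quasiMeasurePreserving_fst
  filter_upwards [hq.ae hy] with p hp
  refine ⟨(hG.comp_measurable
    (measurable_const.prodMk (measurable_const.add measurable_id'))).aestronglyMeasurable, ?_⟩
  rw [eLpNorm_eq_lintegral_rpow_enorm_toReal (by norm_num) (by norm_num)]
  have e : ∫⁻ s : ℝ, (‖G (p.1, p.2 + s)‖₊ : ℝ≥0∞) ^ ((4:ℝ≥0∞).toReal) =
      ∫⁻ y : ℝ, (‖G (p.1, y)‖₊ : ℝ≥0∞) ^ ((4:ℝ≥0∞).toReal) :=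
    (measurePreserving_add_left volume p.2).lintegral_comp
      ((hG.measurable.comp (measurable_const.prodMk measurable_id')).nnnorm.coe_nnreal_ennreal.pow_const _)
  simp only [enorm_eq_nnnorm]
  rw [e]
  refine ENNReal.rpow_lt_top_of_nonneg (by norm_num) ?_
  simpa using hp.ne


lemma schwartz_lint (φ : SchwartzMap ℝ ℂ) : ∫⁻ s, (‖φ s‖₊ : ℝ≥0∞) < ∞ :=
  (φ.integrable (μ := volume)).2

lemma schwartz_memLp2 (φ : SchwartzMap ℝ ℂ) : MemLp (⇑φ) 2 volume := by
  refine ⟨φ.continuous.aestronglyMeasurable, ?_⟩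
  rw [eLpNorm_eq_lintegral_rpow_enorm_toReal (by norm_num) (by norm_num)]
  refine ENNReal.rpow_lt_top_of_nonneg (by norm_num) ?_
  set M : ℝ≥0∞ := ENNReal.ofReal ((SchwartzMap.seminorm ℝ 0 0) φ) with hM
  have hb : ∀ s : ℝ, (‖φ s‖₊ : ℝ≥0∞) ≤ M := by
    intro s
    rw [hM, ← enorm_eq_nnnorm, ← ofReal_norm]
    exact ENNReal.ofReal_le_ofReal (SchwartzMap.norm_le_seminorm ℝ φ s)
  have hcalc : ∫⁻ s, (‖φ s‖₊ : ℝ≥0∞) ^ ((2:ℝ≥0∞).toReal) ≤ M * ∫⁻ s, (‖φ s‖₊ : ℝ≥0∞) := by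
    rw [← lintegral_const_mul' _ _ ENNReal.ofReal_ne_top]
    refine lintegral_mono fun s => ?_
    have h2 : ((2:ℝ≥0∞)).toReal = 2 := by norm_num
    rw [h2, ENNReal.rpow_two, sq]
    exact mul_le_mul' (hb s) le_rfl
  exact (hcalc.trans_lt (ENNReal.mul_lt_top ENNReal.ofReal_lt_top (schwartz_lint φ))).ne

lemma dil_measurable {φ : ℝ → ℂ} (hφ : Measurable φ) (t : ℝ) : Measurable (dil φ t) :=
  ((hφ.comp (measurable_const_mul t⁻¹)).const_mul _)

lemma lint_dil {φ : ℝ → ℂ} (hφ : Measurable φ) {t : ℝ} (ht : 0 < t) :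
    ∫⁻ s, (‖dil φ t s‖₊ : ℝ≥0∞) = ∫⁻ s, (‖φ s‖₊ : ℝ≥0∞) := by
  have hmap : Measure.map (fun s : ℝ => t⁻¹ * s) volume = ENNReal.ofReal |t| • volume := by
    have := Real.map_volume_mul_left (inv_ne_zero ht.ne')
    rw [inv_inv] at this
    exact this
  have hcoef : ((‖((t:ℂ))⁻¹‖₊ : ℝ≥0∞)) * ENNReal.ofReal |t| = 1 := by
    rw [← enorm_eq_nnnorm, ← ofReal_norm, norm_inv, Complex.norm_real, Real.norm_eq_abs,
      ← ENNReal.ofReal_mul (by positivity), inv_mul_cancel₀ (by positivity)]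
    exact ENNReal.ofReal_one
  calc ∫⁻ s, (‖dil φ t s‖₊ : ℝ≥0∞)
      = ∫⁻ s, (‖((t:ℂ))⁻¹‖₊ : ℝ≥0∞) * ‖φ (t⁻¹ * s)‖₊ := by
        refine lintegral_congr fun s => ?_
        rw [dil, nnnorm_mul, ENNReal.coe_mul]
    _ = (‖((t:ℂ))⁻¹‖₊ : ℝ≥0∞) * ∫⁻ s, (‖φ (t⁻¹ * s)‖₊ : ℝ≥0∞) :=
        lintegral_const_mul' _ _ ENNReal.coe_ne_top
    _ = (‖((t:ℂ))⁻¹‖₊ : ℝ≥0∞) * (ENNReal.ofReal |t| * ∫⁻ x, (‖φ x‖₊ : ℝ≥0∞)) := by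
        congr 1
        rw [← lintegral_map hφ.nnnorm.coe_nnreal_ennreal (measurable_const_mul t⁻¹), hmap,
          lintegral_smul_measure, smul_eq_mul]
    _ = ∫⁻ x, (‖φ x‖₊ : ℝ≥0∞) := by rw [← mul_assoc, hcoef, one_mul]

lemma dil_memLp2 (φ : SchwartzMap ℝ ℂ) {t : ℝ} (ht : 0 < t) : MemLp (dil (⇑φ) t) 2 volume := by
  have hmap : Measure.map (fun s : ℝ => t⁻¹ * s) volume = ENNReal.ofReal |t| • volume := by
    have := Real.map_volume_mul_left (inv_ne_zero ht.ne')
    rw [inv_inv] at this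
    exact this
  have h1 : MemLp (⇑φ) 2 (Measure.map (fun s : ℝ => t⁻¹ * s) volume) := by
    rw [hmap]
    exact (schwartz_memLp2 φ).smul_measure ENNReal.ofReal_ne_top
  have h2 := (memLp_map_measure_iff φ.continuous.aestronglyMeasurable
    (measurable_const_mul t⁻¹).aemeasurable).mp h1
  exact h2.const_mul ((t : ℂ))⁻¹

lemma dil_step (φ : ℝ → ℂ) (j : ℕ) (s : ℝ) :
    dil (fun u => φ u - 2 * φ (2 * u)) ((2:ℝ) ^ (j+1)) s
      = dil φ ((2:ℝ) ^ (j+1)) s - dil φ ((2:ℝ) ^ j) s := by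
  simp only [dil]
  have harg : 2 * (((2:ℝ) ^ (j+1))⁻¹ * s) = ((2:ℝ) ^ j)⁻¹ * s := by
    rw [pow_succ]
    field_simp
  have hc : ((((2:ℝ) ^ (j+1) : ℝ)) : ℂ)⁻¹ * 2 = ((((2:ℝ) ^ j : ℝ)) : ℂ)⁻¹ := by
    push_cast
    rw [pow_succ, mul_inv, mul_assoc, inv_mul_cancel₀ two_ne_zero, mul_one]
  rw [mul_sub, harg, ← mul_assoc, hc]


/-- **Growth `O(m^{1/2})` for truncations of the triangular Hilbert transform.**
Let `φ` be a Schwartz function and `ψ(s) = φ(s) - 2φ(2s)`.  Define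
`T_m(F,G)(x,y) = ∑_{j=1}^m ∫_ℝ F(x+s,y) G(x,y+s) 2^{-j} ψ(2^{-j}s) ds`.
Then there is a finite constant `C_ψ` such that for all `F, G ∈ L⁴(ℝ²)` and `m ∈ ℕ`,
`‖T_m(F,G)‖_{L²(ℝ²)} ≤ C_ψ m^{1/2} ‖F‖_{L⁴(ℝ²)} ‖G‖_{L⁴(ℝ²)}`. -/
theorem truncated_triangular_hilbert_transform (φ : SchwartzMap ℝ ℂ) :
    ∃ C : ℝ≥0, ∀ (F G : ℝ × ℝ → ℂ), MemLp F 4 volume → MemLp G 4 volume →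
      ∀ m : ℕ,
      eLpNorm
          (fun p : ℝ × ℝ => ∑ j ∈ Finset.Icc 1 m,
            ∫ s : ℝ, F (p.1 + s, p.2) * G (p.1, p.2 + s) *
              dil (fun u => φ u - 2 * φ (2 * u)) ((2 : ℝ) ^ j) s) 2 volume
        ≤ (C : ℝ≥0∞) * (m : ℝ≥0∞) ^ (1 / 2 : ℝ) *
            eLpNorm F 4 volume * eLpNorm G 4 volume := by
  set L : ℝ≥0∞ := ∫⁻ s, (‖φ s‖₊ : ℝ≥0∞) with hL
  refine ⟨2 * L.toNNReal, ?_⟩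
  intro F G hF4 hG4 m
  rcases Nat.eq_zero_or_pos m with hm | hm
  · subst hm
    simp only [Finset.Icc_eq_empty_of_lt (by norm_num : (0:ℕ) < 1), Finset.sum_empty]
    rw [eLpNorm_zero']
    exact zero_le
  -- measurable representatives
  set F' : ℝ × ℝ → ℂ := hF4.1.mk F with hF'def
  have hF' : StronglyMeasurable F' := hF4.1.stronglyMeasurable_mk
  have hFF' : F =ᵐ[volume] F' := hF4.1.ae_eq_mk
  set G' : ℝ × ℝ → ℂ := hG4.1.mk G with hG'def
  have hG' : StronglyMeasurable G' := hG4.1.stronglyMeasurable_mk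
  have hGG' : G =ᵐ[volume] G' := hG4.1.ae_eq_mk
  have hF4' : MemLp F' 4 volume :=
    ⟨hF'.aestronglyMeasurable, by rw [← eLpNorm_congr_ae hFF']; exact hF4.2⟩
  have hG4' : MemLp G' 4 volume :=
    ⟨hG'.aestronglyMeasurable, by rw [← eLpNorm_congr_ae hGG']; exact hG4.2⟩
  -- single-scale operators at scale 2^k
  set T : ℕ → (ℝ × ℝ) → ℂ := fun k p =>
    ∫ s : ℝ, F' (p.1 + s, p.2) * G' (p.1, p.2 + s) * dil (⇑φ) ((2:ℝ) ^ k) s with hTdef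
  have hdilmeas : ∀ k : ℕ, Measurable (dil (⇑φ) ((2:ℝ) ^ k)) :=
    fun k => dil_measurable φ.continuous.measurable _
  have hTmeas : ∀ k, StronglyMeasurable (T k) := by
    intro k
    apply MeasureTheory.StronglyMeasurable.integral_prod_right'
      (f := fun z : (ℝ × ℝ) × ℝ =>
        F' (z.1.1 + z.2, z.1.2) * G' (z.1.1, z.1.2 + z.2) * dil (⇑φ) ((2:ℝ) ^ k) z.2)
    refine StronglyMeasurable.mul (StronglyMeasurable.mul ?_ ?_) ?_
    · exact hF'.comp_measurable
        ((measurable_fst.fst.add measurable_snd).prodMk measurable_fst.snd)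
    · exact hG'.comp_measurable
        (measurable_fst.fst.prodMk (measurable_fst.snd.add measurable_snd))
    · exact ((hdilmeas k).comp measurable_snd).stronglyMeasurable
  -- a.e. telescoping identity
  have key : (fun p : ℝ × ℝ => ∑ j ∈ Finset.Icc 1 m,
        ∫ s : ℝ, F (p.1 + s, p.2) * G (p.1, p.2 + s) *
          dil (fun u => φ u - 2 * φ (2 * u)) ((2:ℝ) ^ j) s)
      =ᵐ[volume] (fun p => T m p - T 0 p) := by
    filter_upwards [ae_shift_fst hFF', ae_shift_snd hGG', slice_fst hF' hF4',
      slice_snd hG' hG4'] with p hpF hpG hpA hpB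
    have hswap : ∀ t : ℝ → ℂ,
        (∫ s : ℝ, F (p.1 + s, p.2) * G (p.1, p.2 + s) * t s)
          = ∫ s : ℝ, F' (p.1 + s, p.2) * G' (p.1, p.2 + s) * t s := by
      intro t
      refine integral_congr_ae ?_
      filter_upwards [hpF, hpG] with s h1 h2
      rw [h1, h2]
    have hint : ∀ k : ℕ, Integrable
        (fun s : ℝ => F' (p.1 + s, p.2) * G' (p.1, p.2 + s) * dil (⇑φ) ((2:ℝ) ^ k) s)
        volume := by
      intro k
      have hAB : MemLp (fun s : ℝ => F' (p.1 + s, p.2) * G' (p.1, p.2 + s)) 2 volume :=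
        MemLp.smul hpB hpA (hpqr := ⟨by
          rw [← one_div, ← one_div, ENNReal.div_add_div_same, ENNReal.div_eq_div_iff] <;> norm_num⟩)
      have hw2 : MemLp (dil (⇑φ) ((2:ℝ) ^ k)) 2 volume := dil_memLp2 φ (by positivity)
      have h1 : MemLp
          ((fun s : ℝ => F' (p.1 + s, p.2) * G' (p.1, p.2 + s)) • dil (⇑φ) ((2:ℝ) ^ k))
          1 volume :=
        MemLp.smul hw2 hAB (hpqr := ⟨by
          rw [← one_div, ← one_div, ENNReal.div_add_div_same, ENNReal.div_eq_div_iff] <;> norm_num⟩)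
      exact memLp_one_iff_integrable.mp h1
    have hterm : ∀ j : ℕ,
        (∫ s : ℝ, F' (p.1 + s, p.2) * G' (p.1, p.2 + s) *
            dil (fun u => φ u - 2 * φ (2 * u)) ((2:ℝ) ^ (j+1)) s)
          = (∫ s : ℝ, F' (p.1 + s, p.2) * G' (p.1, p.2 + s) * dil (⇑φ) ((2:ℝ) ^ (j+1)) s)
            - ∫ s : ℝ, F' (p.1 + s, p.2) * G' (p.1, p.2 + s) * dil (⇑φ) ((2:ℝ) ^ j) s := by
      intro j
      rw [← integral_sub (hint (j+1)) (hint j)]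
      refine integral_congr_ae (Filter.Eventually.of_forall fun s => ?_)
      simp only [dil_step (⇑φ) j, mul_sub]
    calc (∑ j ∈ Finset.Icc 1 m, ∫ s : ℝ, F (p.1 + s, p.2) * G (p.1, p.2 + s) *
            dil (fun u => φ u - 2 * φ (2 * u)) ((2:ℝ) ^ j) s)
        = ∑ j ∈ Finset.Icc 1 m, ∫ s : ℝ, F' (p.1 + s, p.2) * G' (p.1, p.2 + s) *
            dil (fun u => φ u - 2 * φ (2 * u)) ((2:ℝ) ^ j) s :=
          Finset.sum_congr rfl fun j _ => hswap _
      _ = ∑ i ∈ Finset.range m, ∫ s : ℝ, F' (p.1 + s, p.2) * G' (p.1, p.2 + s) *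
            dil (fun u => φ u - 2 * φ (2 * u)) ((2:ℝ) ^ (1 + i)) s := by
          rw [← Finset.Ico_add_one_right_eq_Icc, Finset.sum_Ico_eq_sum_range]
          simp
      _ = ∑ i ∈ Finset.range m,
            ((∫ s : ℝ, F' (p.1 + s, p.2) * G' (p.1, p.2 + s) * dil (⇑φ) ((2:ℝ) ^ (i+1)) s)
              - ∫ s : ℝ, F' (p.1 + s, p.2) * G' (p.1, p.2 + s) * dil (⇑φ) ((2:ℝ) ^ i) s) := by
          refine Finset.sum_congr rfl fun i _ => ?_
          rw [add_comm 1 i]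
          exact hterm i
      _ = T m p - T 0 p :=
          Finset.sum_range_sub
            (fun k => ∫ s : ℝ, F' (p.1 + s, p.2) * G' (p.1, p.2 + s) *
              dil (⇑φ) ((2:ℝ) ^ k) s) m
  rw [eLpNorm_congr_ae key]
  have htri : eLpNorm (fun p => T m p - T 0 p) 2 volume
      ≤ eLpNorm (T m) 2 volume + eLpNorm (T 0) 2 volume :=
    eLpNorm_sub_le (hTmeas m).aestronglyMeasurable (hTmeas 0).aestronglyMeasurable one_le_two
  have hbound : ∀ k, eLpNorm (T k) 2 volume
      ≤ L * eLpNorm F 4 volume * eLpNorm G 4 volume := by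
    intro k
    have h := single_scale hF' hG' (hdilmeas k)
    rw [lint_dil φ.continuous.measurable (by positivity : (0:ℝ) < (2:ℝ) ^ k)] at h
    rw [← eLpNorm_congr_ae hFF', ← eLpNorm_congr_ae hGG'] at h
    exact h
  refine le_trans htri ?_
  have hm12 : (1:ℝ≥0∞) ≤ (m:ℝ≥0∞) ^ (1/2:ℝ) :=
    ENNReal.one_le_rpow (by exact_mod_cast hm) (by norm_num)
  have hC : ((2 * L.toNNReal : ℝ≥0) : ℝ≥0∞) = 2 * L := by
    rw [ENNReal.coe_mul, ENNReal.coe_toNNReal (schwartz_lint φ).ne]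
    norm_num
    rfl
  calc eLpNorm (T m) 2 volume + eLpNorm (T 0) 2 volume
      ≤ L * eLpNorm F 4 volume * eLpNorm G 4 volume
        + L * eLpNorm F 4 volume * eLpNorm G 4 volume := add_le_add (hbound m) (hbound 0)
    _ = 2 * L * eLpNorm F 4 volume * eLpNorm G 4 volume := by ring
    _ ≤ 2 * L * (m:ℝ≥0∞) ^ (1/2:ℝ) * eLpNorm F 4 volume * eLpNorm G 4 volume := by
        refine mul_le_mul_left (mul_le_mul_left ?_ _) _
        calc 2 * L = 2 * L * 1 := by rw [mul_one]
          _ ≤ 2 * L * (m:ℝ≥0∞) ^ (1/2:ℝ) := mul_le_mul_right hm12 _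
    _ = ((2 * L.toNNReal : ℝ≥0) : ℝ≥0∞) * (m:ℝ≥0∞) ^ (1/2:ℝ)
          * eLpNorm F 4 volume * eLpNorm G 4 volume := by rw [hC]
end

section
/- Let ρ̃, ρ ∈ L¹(ℝ) and let F be a real-valued Schwartz function on ℝ². For t > 0 define Ξ_{ρ̃,ρ,t}(F) := ∫_{ℝ⁴} F(y,x') F(x,x') F(y,y') F(x,y') ρ̃_t(x' − y') ρ_t(x − y) dx dy dx' dy'. Then |Ξ_{ρ̃,ρ,t}(F)| ≤ ‖ρ̃‖_{L¹(ℝ)} ‖ρ‖_{L¹(ℝ)} ‖F‖_{L⁴(ℝ²)}⁴. -/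
open MeasureTheory
open scoped ENNReal NNReal

namespace XiAux

lemma conj22 : Real.HolderConjugate 2 2 := ⟨by norm_num, by norm_num, by norm_num⟩

lemma shift_eq (G : ℝ × ℝ → ℝ≥0∞) (c : ℝ × ℝ) :
    ∫⁻ z : ℝ × ℝ, G (z + c) ^ (4 : ℝ) = ∫⁻ z : ℝ × ℝ, G z ^ (4 : ℝ) :=
  lintegral_add_right_eq_self (fun z => G z ^ (4 : ℝ)) c

lemma pair_bound {G : ℝ × ℝ → ℝ≥0∞} (hG : Measurable G) (c d : ℝ × ℝ) :
    ∫⁻ z : ℝ × ℝ, (G (z + c) * G (z + d)) ^ (2 : ℝ)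
      ≤ ∫⁻ z : ℝ × ℝ, G z ^ (4 : ℝ) := by
  have h1 : ∀ z : ℝ × ℝ, (G (z + c) * G (z + d)) ^ (2 : ℝ)
      = G (z + c) ^ (2 : ℝ) * G (z + d) ^ (2 : ℝ) := fun z =>
    ENNReal.mul_rpow_of_nonneg _ _ (by norm_num)
  calc ∫⁻ z : ℝ × ℝ, (G (z + c) * G (z + d)) ^ (2 : ℝ)
      = ∫⁻ z : ℝ × ℝ, G (z + c) ^ (2 : ℝ) * G (z + d) ^ (2 : ℝ) := lintegral_congr h1
    _ ≤ (∫⁻ z : ℝ × ℝ, (G (z + c) ^ (2 : ℝ)) ^ (2 : ℝ)) ^ (1 / 2 : ℝ)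
        * (∫⁻ z : ℝ × ℝ, (G (z + d) ^ (2 : ℝ)) ^ (2 : ℝ)) ^ (1 / 2 : ℝ) :=
        ENNReal.lintegral_mul_le_Lp_mul_Lq volume conj22
          ((hG.comp (measurable_add_const c)).aemeasurable.pow_const _)
          ((hG.comp (measurable_add_const d)).aemeasurable.pow_const _)
    _ = (∫⁻ z : ℝ × ℝ, G (z + c) ^ (4 : ℝ)) ^ (1 / 2 : ℝ)
        * (∫⁻ z : ℝ × ℝ, G (z + d) ^ (4 : ℝ)) ^ (1 / 2 : ℝ) := by
        congr 1 <;>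
          · congr 1
            refine lintegral_congr fun z => ?_
            rw [← ENNReal.rpow_mul]
            norm_num
    _ = (∫⁻ z : ℝ × ℝ, G z ^ (4 : ℝ)) ^ (1 / 2 : ℝ)
        * (∫⁻ z : ℝ × ℝ, G z ^ (4 : ℝ)) ^ (1 / 2 : ℝ) := by
        rw [shift_eq G c, shift_eq G d]
    _ = ∫⁻ z : ℝ × ℝ, G z ^ (4 : ℝ) := by
        rw [← ENNReal.rpow_add_of_nonneg (1 / 2 : ℝ) (1 / 2 : ℝ) (by norm_num) (by norm_num)]
        norm_num

lemma holder4 {G : ℝ × ℝ → ℝ≥0∞} (hG : Measurable G) (a b : ℝ) :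
    ∫⁻ z : ℝ × ℝ, G (z.1, b + z.2) * G (a + z.1, b + z.2) * (G z * G (a + z.1, z.2))
      ≤ ∫⁻ z : ℝ × ℝ, G z ^ (4 : ℝ) := by
  have e1 : ∀ z : ℝ × ℝ, (z.1, b + z.2) = z + ((0 : ℝ), b) := fun z => by
    simp [Prod.ext_iff, add_comm]
  have e2 : ∀ z : ℝ × ℝ, (a + z.1, b + z.2) = z + (a, b) := fun z => by
    simp [Prod.ext_iff, add_comm]
  have e3 : ∀ z : ℝ × ℝ, z = z + ((0 : ℝ), (0 : ℝ)) := fun z => by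
    simp [Prod.ext_iff]
  have e4 : ∀ z : ℝ × ℝ, (a + z.1, z.2) = z + (a, 0) := fun z => by
    simp [Prod.ext_iff, add_comm]
  have hf : Measurable fun z : ℝ × ℝ => G (z + ((0 : ℝ), b)) * G (z + (a, b)) :=
    (hG.comp (measurable_add_const _)).mul (hG.comp (measurable_add_const _))
  have hg : Measurable fun z : ℝ × ℝ => G (z + ((0 : ℝ), (0 : ℝ))) * G (z + (a, 0)) :=
    (hG.comp (measurable_add_const _)).mul (hG.comp (measurable_add_const _))
  have hp1 := pair_bound hG ((0 : ℝ), b) (a, b)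
  have hp2 := pair_bound hG ((0 : ℝ), (0 : ℝ)) (a, 0)
  calc ∫⁻ z : ℝ × ℝ, G (z.1, b + z.2) * G (a + z.1, b + z.2) * (G z * G (a + z.1, z.2))
      = ∫⁻ z : ℝ × ℝ, (G (z + ((0 : ℝ), b)) * G (z + (a, b)))
          * (G (z + ((0 : ℝ), (0 : ℝ))) * G (z + (a, 0))) := by
        refine lintegral_congr fun z => ?_
        rw [← e1 z, ← e2 z, ← e3 z, ← e4 z]
    _ ≤ (∫⁻ z : ℝ × ℝ, (G (z + ((0 : ℝ), b)) * G (z + (a, b))) ^ (2 : ℝ)) ^ (1 / 2 : ℝ)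
        * (∫⁻ z : ℝ × ℝ, (G (z + ((0 : ℝ), (0 : ℝ))) * G (z + (a, 0))) ^ (2 : ℝ)) ^ (1 / 2 : ℝ) :=
        ENNReal.lintegral_mul_le_Lp_mul_Lq volume conj22 hf.aemeasurable hg.aemeasurable
    _ ≤ (∫⁻ z : ℝ × ℝ, G z ^ (4 : ℝ)) ^ (1 / 2 : ℝ)
        * (∫⁻ z : ℝ × ℝ, G z ^ (4 : ℝ)) ^ (1 / 2 : ℝ) :=
        mul_le_mul' (ENNReal.rpow_le_rpow hp1 (by norm_num))
          (ENNReal.rpow_le_rpow hp2 (by norm_num))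
    _ = ∫⁻ z : ℝ × ℝ, G z ^ (4 : ℝ) := by
        rw [← ENNReal.rpow_add_of_nonneg (1 / 2 : ℝ) (1 / 2 : ℝ) (by norm_num) (by norm_num)]
        norm_num

lemma qmp_mul_left {c : ℝ} (hc : c ≠ 0) :
    Measure.QuasiMeasurePreserving (fun s : ℝ => c * s) volume volume :=
  ⟨measurable_const_mul c, by
    rw [Real.map_volume_mul_left hc]; exact Measure.smul_absolutelyContinuous⟩

lemma lintegral_nnnorm_dil (φ : ℝ → ℂ) (hφ : AEMeasurable φ volume) {t : ℝ} (ht : 0 < t) :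
    ∫⁻ s : ℝ, (‖dil φ t s‖₊ : ℝ≥0∞) = ∫⁻ s : ℝ, (‖φ s‖₊ : ℝ≥0∞) := by
  have ht' : t ≠ 0 := ht.ne'
  have hmap : Measure.map (fun s : ℝ => t⁻¹ * s) volume = ENNReal.ofReal t • volume := by
    rw [Real.map_volume_mul_left (inv_ne_zero ht')]
    congr 1
    rw [inv_inv, abs_of_pos ht]
  have h1 : ∀ s : ℝ, (‖dil φ t s‖₊ : ℝ≥0∞) = ENNReal.ofReal t⁻¹ * (‖φ (t⁻¹ * s)‖₊ : ℝ≥0∞) := by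
    intro s
    have : (‖(t : ℂ)⁻¹‖₊ : ℝ≥0∞) = ENNReal.ofReal t⁻¹ := by
      rw [← enorm_eq_nnnorm, ← ofReal_norm]
      congr 1
      rw [norm_inv, Complex.norm_real, Real.norm_eq_abs, abs_of_pos ht]
    rw [dil, nnnorm_mul, ENNReal.coe_mul, this]
  have h2 : ∫⁻ s : ℝ, (‖φ (t⁻¹ * s)‖₊ : ℝ≥0∞)
      = ENNReal.ofReal t * ∫⁻ s : ℝ, (‖φ s‖₊ : ℝ≥0∞) := by
    have hg : AEMeasurable (fun u : ℝ => (‖φ u‖₊ : ℝ≥0∞))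
        (Measure.map (fun s : ℝ => t⁻¹ * s) volume) := by
      rw [hmap]; exact hφ.enorm.smul_measure _
    rw [← lintegral_map' hg (measurable_const_mul t⁻¹).aemeasurable, hmap,
      lintegral_smul_measure, smul_eq_mul]
  calc ∫⁻ s : ℝ, (‖dil φ t s‖₊ : ℝ≥0∞)
      = ∫⁻ s : ℝ, ENNReal.ofReal t⁻¹ * (‖φ (t⁻¹ * s)‖₊ : ℝ≥0∞) := lintegral_congr h1
    _ = ENNReal.ofReal t⁻¹ * ∫⁻ s : ℝ, (‖φ (t⁻¹ * s)‖₊ : ℝ≥0∞) :=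
        lintegral_const_mul' _ _ ENNReal.ofReal_ne_top
    _ = ENNReal.ofReal t⁻¹ * (ENNReal.ofReal t * ∫⁻ s : ℝ, (‖φ s‖₊ : ℝ≥0∞)) := by rw [h2]
    _ = ∫⁻ s : ℝ, (‖φ s‖₊ : ℝ≥0∞) := by
        rw [← mul_assoc, ← ENNReal.ofReal_mul (by positivity), inv_mul_cancel₀ ht',
          ENNReal.ofReal_one, one_mul]


theorem main (ρ' ρ : ℝ → ℂ) (hρ'meas : Measurable ρ') (hρmeas : Measurable ρ)
    (hρ' : Integrable ρ') (hρ : Integrable ρ)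
    (F : SchwartzMap (ℝ × ℝ) ℝ) (t : ℝ) (ht : 0 < t) :
    ‖∫ w : (ℝ × ℝ) × ℝ × ℝ,
        (F (w.1.2, w.2.1) : ℂ) * (F (w.1.1, w.2.1) : ℂ) * (F (w.1.2, w.2.2) : ℂ) *
          (F (w.1.1, w.2.2) : ℂ) *
          dil ρ' t (w.2.1 - w.2.2) * dil ρ t (w.1.1 - w.1.2)‖
      ≤ (∫ u : ℝ, ‖ρ' u‖) * (∫ u : ℝ, ‖ρ u‖) * (eLpNorm (⇑F) 4 volume).toReal ^ 4 := by
  have hG : Measurable fun p : ℝ × ℝ => (‖F p‖₊ : ℝ≥0∞) := F.continuous.measurable.enorm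
  set G : ℝ × ℝ → ℝ≥0∞ := fun p => (‖F p‖₊ : ℝ≥0∞) with hGdef
  set M : ℝ≥0∞ := ∫⁻ z : ℝ × ℝ, G z ^ (4 : ℝ) with hMdef
  set R' : ℝ → ℝ≥0∞ := fun s => (‖dil ρ' t s‖₊ : ℝ≥0∞) with hR'def
  set R : ℝ → ℝ≥0∞ := fun s => (‖dil ρ t s‖₊ : ℝ≥0∞) with hRdef
  have hR' : Measurable R' :=
    (measurable_const.mul (hρ'meas.comp (measurable_const_mul t⁻¹))).enorm
  have hR : Measurable R :=
    (measurable_const.mul (hρmeas.comp (measurable_const_mul t⁻¹))).enorm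
  set K : ℝ → ℝ → ℝ × ℝ → ℝ≥0∞ := fun a b z =>
    G (z.1, b + z.2) * G (a + z.1, b + z.2) * (G z * G (a + z.1, z.2)) with hKdef
  have hK : Measurable fun v : (ℝ × ℝ) × ℝ × ℝ => K v.1.1 v.2.1 (v.1.2, v.2.2) := by
    apply Measurable.fun_mul
    apply Measurable.fun_mul
    · exact hG.comp (measurable_fst.snd.prodMk (measurable_snd.fst.add measurable_snd.snd))
    · exact hG.comp ((measurable_fst.fst.add measurable_fst.snd).prodMk
        (measurable_snd.fst.add measurable_snd.snd))
    apply Measurable.fun_mul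
    · exact hG.comp (measurable_fst.snd.prodMk measurable_snd.snd)
    · exact hG.comp ((measurable_fst.fst.add measurable_fst.snd).prodMk measurable_snd.snd)
  have hKab : ∀ a b : ℝ, Measurable (K a b) := by
    intro a b
    have : (K a b) = (fun v : (ℝ × ℝ) × ℝ × ℝ => K v.1.1 v.2.1 (v.1.2, v.2.2)) ∘
        (fun z : ℝ × ℝ => ((a, z.1), (b, z.2))) := rfl
    rw [this]
    exact hK.comp ((measurable_const.prodMk measurable_fst).prodMk
      (measurable_const.prodMk measurable_snd))
  set N : (ℝ × ℝ) × ℝ × ℝ → ℝ≥0∞ := fun w =>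
    G (w.1.2, w.2.1) * G (w.1.1, w.2.1) * G (w.1.2, w.2.2) * G (w.1.1, w.2.2) *
      R' (w.2.1 - w.2.2) * R (w.1.1 - w.1.2) with hNdef
  have hN : Measurable N := by
    apply Measurable.fun_mul
    apply Measurable.fun_mul
    apply Measurable.fun_mul
    apply Measurable.fun_mul
    apply Measurable.fun_mul
    · exact hG.comp (measurable_fst.snd.prodMk measurable_snd.fst)
    · exact hG.comp (measurable_fst.fst.prodMk measurable_snd.fst)
    · exact hG.comp (measurable_fst.snd.prodMk measurable_snd.snd)
    · exact hG.comp (measurable_fst.fst.prodMk measurable_snd.snd)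
    · exact hR'.comp (measurable_snd.fst.sub measurable_snd.snd)
    · exact hR.comp (measurable_fst.fst.sub measurable_fst.snd)
  -- Step A : bound the Bochner integral by the lintegral of N
  have stepA : ‖∫ w : (ℝ × ℝ) × ℝ × ℝ,
        (F (w.1.2, w.2.1) : ℂ) * (F (w.1.1, w.2.1) : ℂ) * (F (w.1.2, w.2.2) : ℂ) *
          (F (w.1.1, w.2.2) : ℂ) *
          dil ρ' t (w.2.1 - w.2.2) * dil ρ t (w.1.1 - w.1.2)‖
      ≤ (∫⁻ w, N w).toReal := by
    refine (norm_integral_le_lintegral_norm _).trans_eq ?_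
    congr 1
    refine lintegral_congr fun w => ?_
    rw [ofReal_norm, enorm_eq_nnnorm]
    simp [hNdef, hGdef, hR'def, hRdef, nnnorm_mul, ENNReal.coe_mul]
  -- change of variables
  have hS : MeasurePreserving (fun z : ℝ × ℝ => (z.1 + z.2, z.2))
      (volume : Measure (ℝ × ℝ)) volume := measurePreserving_add_prod volume volume
  have hT : MeasurePreserving
      (fun v : (ℝ × ℝ) × ℝ × ℝ => ((v.1.1 + v.1.2, v.1.2), (v.2.1 + v.2.2, v.2.2)))
      (volume : Measure ((ℝ × ℝ) × ℝ × ℝ)) volume := hS.prod hS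
  set Φ : (ℝ × ℝ) × ℝ × ℝ → ℝ≥0∞ := fun v =>
    K v.1.1 v.2.1 (v.1.2, v.2.2) * (R' v.2.1 * R v.1.1) with hΦdef
  have hΦ : Measurable Φ :=
    hK.mul ((hR'.comp measurable_snd.fst).mul (hR.comp measurable_fst.fst))
  have hcv : (∫⁻ w, N w) = ∫⁻ v, Φ v := by
    rw [← hT.lintegral_comp hN]
    refine lintegral_congr fun v => ?_
    simp only [hNdef, hΦdef, hKdef, add_sub_cancel_right]
    ring
  -- Hölder bound for the inner double integral
  have inner_eq : ∀ a b : ℝ, (∫⁻ y, ∫⁻ y', K a b (y, y') * (R' b * R a))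
      = (∫⁻ z : ℝ × ℝ, K a b z) * (R' b * R a) := by
    intro a b
    calc ∫⁻ y, ∫⁻ y', K a b (y, y') * (R' b * R a)
        = ∫⁻ y, (∫⁻ y', K a b (y, y')) * (R' b * R a) :=
          lintegral_congr fun y =>
            lintegral_mul_const _ ((hKab a b).comp measurable_prodMk_left)
      _ = (∫⁻ y, ∫⁻ y', K a b (y, y')) * (R' b * R a) :=
          lintegral_mul_const _ (hKab a b).lintegral_prod_right'
      _ = (∫⁻ z : ℝ × ℝ, K a b z) * (R' b * R a) := by
          congr 1
          rw [Measure.volume_eq_prod]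
          exact (lintegral_prod _ (hKab a b).aemeasurable).symm
  -- the main chain
  have key : (∫⁻ w, N w) ≤ (∫⁻ s, R' s) * M * (∫⁻ s, R s) := by
    calc (∫⁻ w, N w) = ∫⁻ v, Φ v := hcv
      _ = ∫⁻ p : ℝ × ℝ, ∫⁻ q : ℝ × ℝ, Φ (p, q) := by
          rw [Measure.volume_eq_prod]; exact lintegral_prod _ hΦ.aemeasurable
      _ = ∫⁻ a : ℝ, ∫⁻ y : ℝ, ∫⁻ q : ℝ × ℝ, Φ ((a, y), q) := by
          rw [Measure.volume_eq_prod]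
          exact lintegral_prod _ hΦ.lintegral_prod_right'.aemeasurable
      _ = ∫⁻ a : ℝ, ∫⁻ y : ℝ, ∫⁻ b : ℝ, ∫⁻ y' : ℝ, Φ ((a, y), (b, y')) := by
          refine lintegral_congr fun a => lintegral_congr fun y => ?_
          rw [Measure.volume_eq_prod]
          exact lintegral_prod _ (hΦ.comp measurable_prodMk_left).aemeasurable
      _ = ∫⁻ a : ℝ, ∫⁻ b : ℝ, ∫⁻ y : ℝ, ∫⁻ y' : ℝ, Φ ((a, y), (b, y')) := by
          refine lintegral_congr fun a => ?_
          refine lintegral_lintegral_swap ?_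
          have hm : Measurable fun u : (ℝ × ℝ) × ℝ => Φ ((a, u.1.1), (u.1.2, u.2)) :=
            hΦ.comp (((measurable_const.prodMk measurable_fst.fst)).prodMk
              (measurable_fst.snd.prodMk measurable_snd))
          exact hm.lintegral_prod_right'.aemeasurable
      _ ≤ ∫⁻ a : ℝ, ∫⁻ b : ℝ, R' b * (M * R a) := by
          refine lintegral_mono fun a => lintegral_mono fun b => ?_
          have : (∫⁻ y : ℝ, ∫⁻ y' : ℝ, Φ ((a, y), (b, y')))
              = (∫⁻ z : ℝ × ℝ, K a b z) * (R' b * R a) := inner_eq a b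
          rw [this]
          calc (∫⁻ z : ℝ × ℝ, K a b z) * (R' b * R a)
              ≤ M * (R' b * R a) := mul_le_mul_left (holder4 hG a b) _
            _ = R' b * (M * R a) := by ring
      _ = ∫⁻ a : ℝ, (∫⁻ s, R' s) * (M * R a) := by
          refine lintegral_congr fun a => ?_
          exact lintegral_mul_const _ hR'
      _ = (∫⁻ s, R' s) * M * (∫⁻ s, R s) := by
          simp_rw [← mul_assoc]
          rw [lintegral_const_mul _ hR]
  -- finiteness of M
  have hint : (∫⁻ p : ℝ × ℝ, G p) ≠ ∞ := (F.integrable (μ := volume)).2.ne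
  have hMfin : M ≠ ∞ := by
    set c : ℝ≥0∞ := ENNReal.ofReal (SchwartzMap.seminorm ℝ 0 0 F) with hcdef
    have hb : ∀ p : ℝ × ℝ, G p ≤ c := fun p => by
      rw [hGdef]
      simp only
      rw [← enorm_eq_nnnorm, ← ofReal_norm]
      exact ENNReal.ofReal_le_ofReal (SchwartzMap.norm_le_seminorm ℝ F p)
    have hle : M ≤ c ^ (3 : ℝ) * ∫⁻ p : ℝ × ℝ, G p := by
      rw [hMdef, ← lintegral_const_mul _ hG]
      refine lintegral_mono fun p => ?_
      have h4 : G p ^ (4 : ℝ) = G p ^ (3 : ℝ) * G p := by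
        rw [show (4 : ℝ) = 3 + 1 by norm_num,
          ENNReal.rpow_add_of_nonneg (3 : ℝ) (1 : ℝ) (by norm_num) (by norm_num),
          ENNReal.rpow_one]
      rw [h4]
      exact mul_le_mul' (ENNReal.rpow_le_rpow (hb p) (by norm_num)) le_rfl
    exact ne_top_of_le_ne_top
      (ENNReal.mul_ne_top (ENNReal.rpow_ne_top_of_nonneg (by norm_num) ENNReal.ofReal_ne_top)
        hint) hle
  -- identify M with the L⁴ norm
  have hM4 : M = eLpNorm (⇑F) 4 volume ^ (4 : ℝ) := by
    rw [eLpNorm_eq_lintegral_rpow_enorm_toReal (by norm_num) (by norm_num)]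
    rw [← ENNReal.rpow_mul]
    norm_num
    simp only [hMdef, hGdef]
    refine lintegral_congr fun z => ?_
    rw [show ((4 : ℝ)) = ((4 : ℕ) : ℝ) by norm_num, ENNReal.rpow_natCast]
    rfl
  -- scaling identities
  have hJ' : ∫⁻ s, R' s = ∫⁻ s, (‖ρ' s‖₊ : ℝ≥0∞) :=
    lintegral_nnnorm_dil ρ' hρ'meas.aemeasurable ht
  have hJ : ∫⁻ s, R s = ∫⁻ s, (‖ρ s‖₊ : ℝ≥0∞) :=
    lintegral_nnnorm_dil ρ hρmeas.aemeasurable ht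
  have hI' : (∫⁻ s, (‖ρ' s‖₊ : ℝ≥0∞)) = ENNReal.ofReal (∫ u : ℝ, ‖ρ' u‖) :=
    (ofReal_integral_norm_eq_lintegral_enorm hρ').symm
  have hI : (∫⁻ s, (‖ρ s‖₊ : ℝ≥0∞)) = ENNReal.ofReal (∫ u : ℝ, ‖ρ u‖) :=
    (ofReal_integral_norm_eq_lintegral_enorm hρ).symm
  have hfin : (∫⁻ s, R' s) * M * (∫⁻ s, R s) ≠ ∞ := by
    rw [hJ', hJ]
    exact ENNReal.mul_ne_top (ENNReal.mul_ne_top hρ'.2.ne hMfin) hρ.2.ne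
  calc ‖∫ w : (ℝ × ℝ) × ℝ × ℝ,
        (F (w.1.2, w.2.1) : ℂ) * (F (w.1.1, w.2.1) : ℂ) * (F (w.1.2, w.2.2) : ℂ) *
          (F (w.1.1, w.2.2) : ℂ) *
          dil ρ' t (w.2.1 - w.2.2) * dil ρ t (w.1.1 - w.1.2)‖
      ≤ (∫⁻ w, N w).toReal := stepA
    _ ≤ ((∫⁻ s, R' s) * M * (∫⁻ s, R s)).toReal := ENNReal.toReal_mono hfin key
    _ = (∫ u : ℝ, ‖ρ' u‖) * (∫ u : ℝ, ‖ρ u‖) * (eLpNorm (⇑F) 4 volume).toReal ^ 4 := by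
        rw [hJ', hJ, hI', hI, hM4, ENNReal.toReal_mul, ENNReal.toReal_mul,
          ENNReal.toReal_ofReal (integral_nonneg fun u => norm_nonneg _),
          ENNReal.toReal_ofReal (integral_nonneg fun u => norm_nonneg _),
          ← ENNReal.toReal_rpow]
        rw [show ((4 : ℝ)) = ((4 : ℕ) : ℝ) by norm_num, Real.rpow_natCast]
        ring

end XiAux


/-- **Single-scale bound for the form `Ξ`.**
For `ρ̃, ρ ∈ L¹(ℝ)`, a real-valued Schwartz function `F` on `ℝ²`, and `t > 0`, the form
`Ξ_{ρ̃,ρ,t}(F) = ∫_{ℝ⁴} F(y,x')F(x,x')F(y,y')F(x,y') ρ̃_t(x'-y') ρ_t(x-y) dx dy dx' dy'`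
satisfies `|Ξ_{ρ̃,ρ,t}(F)| ≤ ‖ρ̃‖_{L¹(ℝ)} ‖ρ‖_{L¹(ℝ)} ‖F‖_{L⁴(ℝ²)}⁴`. -/
theorem single_scale_Xi_bound (ρ' ρ : ℝ → ℂ) (hρ' : Integrable ρ') (hρ : Integrable ρ)
    (F : SchwartzMap (ℝ × ℝ) ℝ) (t : ℝ) (ht : 0 < t) :
    ‖∫ w : (ℝ × ℝ) × ℝ × ℝ,
        (F (w.1.2, w.2.1) : ℂ) * (F (w.1.1, w.2.1) : ℂ) * (F (w.1.2, w.2.2) : ℂ) *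
          (F (w.1.1, w.2.2) : ℂ) *
          dil ρ' t (w.2.1 - w.2.2) * dil ρ t (w.1.1 - w.1.2)‖
      ≤ (∫ u : ℝ, ‖ρ' u‖) * (∫ u : ℝ, ‖ρ u‖) * (eLpNorm (⇑F) 4 volume).toReal ^ 4 := by
  obtain ⟨ρ'm, hρ'm_sm, hρ'e⟩ : ∃ g, StronglyMeasurable g ∧ ρ' =ᵐ[volume] g :=
    ⟨hρ'.1.mk ρ', hρ'.1.stronglyMeasurable_mk, hρ'.1.ae_eq_mk⟩
  obtain ⟨ρm, hρm_sm, hρe⟩ : ∃ g, StronglyMeasurable g ∧ ρ =ᵐ[volume] g :=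
    ⟨hρ.1.mk ρ, hρ.1.stronglyMeasurable_mk, hρ.1.ae_eq_mk⟩
  have hπ' : Measure.QuasiMeasurePreserving
      (fun w : (ℝ × ℝ) × ℝ × ℝ => t⁻¹ * (w.2.1 - w.2.2)) volume volume :=
    (XiAux.qmp_mul_left (inv_ne_zero ht.ne')).comp
      ((quasiMeasurePreserving_sub volume volume).comp Measure.quasiMeasurePreserving_snd)
  have hπ : Measure.QuasiMeasurePreserving
      (fun w : (ℝ × ℝ) × ℝ × ℝ => t⁻¹ * (w.1.1 - w.1.2)) volume volume :=
    (XiAux.qmp_mul_left (inv_ne_zero ht.ne')).comp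
      ((quasiMeasurePreserving_sub volume volume).comp Measure.quasiMeasurePreserving_fst)
  have he1 : (fun w : (ℝ × ℝ) × ℝ × ℝ => ρ' (t⁻¹ * (w.2.1 - w.2.2)))
      =ᵐ[volume] fun w => ρ'm (t⁻¹ * (w.2.1 - w.2.2)) := hπ'.ae_eq hρ'e
  have he2 : (fun w : (ℝ × ℝ) × ℝ × ℝ => ρ (t⁻¹ * (w.1.1 - w.1.2)))
      =ᵐ[volume] fun w => ρm (t⁻¹ * (w.1.1 - w.1.2)) := hπ.ae_eq hρe
  have hL : (∫ w : (ℝ × ℝ) × ℝ × ℝ,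
        (F (w.1.2, w.2.1) : ℂ) * (F (w.1.1, w.2.1) : ℂ) * (F (w.1.2, w.2.2) : ℂ) *
          (F (w.1.1, w.2.2) : ℂ) *
          dil ρ' t (w.2.1 - w.2.2) * dil ρ t (w.1.1 - w.1.2))
      = ∫ w : (ℝ × ℝ) × ℝ × ℝ,
        (F (w.1.2, w.2.1) : ℂ) * (F (w.1.1, w.2.1) : ℂ) * (F (w.1.2, w.2.2) : ℂ) *
          (F (w.1.1, w.2.2) : ℂ) *
          dil ρ'm t (w.2.1 - w.2.2) * dil ρm t (w.1.1 - w.1.2) := by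
    refine integral_congr_ae ?_
    filter_upwards [he1, he2] with w h1 h2
    simp only [dil]
    rw [h1, h2]
  have hr1 : (∫ u : ℝ, ‖ρ' u‖) = ∫ u : ℝ, ‖ρ'm u‖ :=
    integral_congr_ae (hρ'e.fun_comp norm)
  have hr2 : (∫ u : ℝ, ‖ρ u‖) = ∫ u : ℝ, ‖ρm u‖ :=
    integral_congr_ae (hρe.fun_comp norm)
  rw [hL, hr1, hr2]
  exact XiAux.main ρ'm ρm hρ'm_sm.measurable hρm_sm.measurable (hρ'.congr hρ'e)
    (hρ.congr hρe) F t ht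
end

section
/- Let λ > 0, let g(s) := e^{−π s²}, and define σ(s) := ∫_1^∞ α⁻¹ g(α⁻¹ s) α^{−λ} dα for s ∈ ℝ. Then there is a finite constant C_λ depending only on λ such that (1 + |s|)^{−λ} ≤ C_λ σ(s) for all s ∈ ℝ. -/
open MeasureTheory
open scoped ENNReal NNReal

/-- **Domination by a superposition of Gaussians.**
Let `λ > 0`, `g(s) = e^{-πs²}`, and `σ(s) = ∫_1^∞ α⁻¹ g(α⁻¹ s) α^{-λ} dα`.  Then there
is a finite constant `C_λ` such that `(1+|s|)^{-λ} ≤ C_λ σ(s)` for all `s ∈ ℝ`. -/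
theorem gaussian_superposition_domination (lam : ℝ) (hlam : 0 < lam) :
    ∃ C : ℝ, ∀ s : ℝ,
      (1 + |s|) ^ (-lam)
        ≤ C * ∫ α in Set.Ioi (1 : ℝ),
            α⁻¹ * Real.exp (-Real.pi * (α⁻¹ * s) ^ 2) * α ^ (-lam) := by
  refine ⟨2 ^ (1 + lam) * Real.exp Real.pi, fun s => ?_⟩
  set f : ℝ → ℝ := fun α => α⁻¹ * Real.exp (-Real.pi * (α⁻¹ * s) ^ 2) * α ^ (-lam) with hf
  set b : ℝ := 1 + |s| with hb
  have hb1 : (1:ℝ) ≤ b := le_add_of_nonneg_right (abs_nonneg s)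
  have hb0 : (0:ℝ) < b := lt_of_lt_of_le one_pos hb1
  -- pointwise nonnegativity
  have hfnn : ∀ α ∈ Set.Ioi (1:ℝ), 0 ≤ f α := by
    intro α hα
    have h0 : (0:ℝ) < α := lt_trans one_pos hα
    positivity
  -- measurability
  have hsm : AEStronglyMeasurable f (volume.restrict (Set.Ioi (1:ℝ))) := by
    apply Measurable.aestronglyMeasurable
    fun_prop
  -- integrability on Ioi 1
  have hint : IntegrableOn f (Set.Ioi (1:ℝ)) := by
    have hg : IntegrableOn (fun α : ℝ => α ^ (-(1+lam))) (Set.Ioi (1:ℝ)) :=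
      integrableOn_Ioi_rpow_of_lt (by linarith) one_pos
    refine Integrable.mono hg hsm ?_
    filter_upwards [ae_restrict_mem measurableSet_Ioi] with α hα
    have h0 : (0:ℝ) < α := lt_trans one_pos hα
    rw [Real.norm_eq_abs, Real.norm_eq_abs, abs_of_nonneg (hfnn α hα),
      abs_of_nonneg (Real.rpow_nonneg h0.le _)]
    have hexp : Real.exp (-Real.pi * (α⁻¹ * s) ^ 2) ≤ 1 := by
      rw [Real.exp_le_one_iff]
      have : (0:ℝ) ≤ (α⁻¹ * s) ^ 2 := sq_nonneg _
      nlinarith [Real.pi_pos]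
    calc f α ≤ α⁻¹ * 1 * α ^ (-lam) := by
          apply mul_le_mul_of_nonneg_right _ (Real.rpow_nonneg h0.le _)
          exact mul_le_mul_of_nonneg_left hexp (inv_nonneg.mpr h0.le)
      _ = α ^ (-(1+lam)) := by
          rw [mul_one, ← Real.rpow_neg_one α, ← Real.rpow_add h0]
          ring_nf
  -- restrict to the interval Ioc b (2*b)
  have hsub : Set.Ioc b (2*b) ⊆ Set.Ioi (1:ℝ) := fun α hα =>
    lt_of_le_of_lt hb1 hα.1
  have hstep1 : ∫ α in Set.Ioc b (2*b), f α ≤ ∫ α in Set.Ioi (1:ℝ), f α := by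
    apply setIntegral_mono_set hint
    · filter_upwards [ae_restrict_mem measurableSet_Ioi] with α hα using hfnn α hα
    · exact Filter.Eventually.of_forall hsub
  -- lower bound on the interval
  set c : ℝ := (2*b)⁻¹ * Real.exp (-Real.pi) * (2*b) ^ (-lam) with hc
  have hc0 : 0 < c := by positivity
  have hstep2 : c * b ≤ ∫ α in Set.Ioc b (2*b), f α := by
    have hconst : ∫ _α in Set.Ioc b (2*b), c = c * b := by
      rw [setIntegral_const, measureReal_def, Real.volume_Ioc, smul_eq_mul, mul_comm]
      congr 1
      rw [ENNReal.toReal_ofReal (by linarith)]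
      ring
    rw [← hconst]
    apply setIntegral_mono_on ((integrableOn_const_iff).mpr (Or.inr (by
      rw [Real.volume_Ioc]; exact ENNReal.ofReal_lt_top)))
      (hint.mono_set hsub) measurableSet_Ioc
    intro α hα
    have hα1 : b < α := hα.1
    have hα2 : α ≤ 2*b := hα.2
    have h0 : (0:ℝ) < α := lt_of_le_of_lt hb0.le hα1
    have h1 : (2*b)⁻¹ ≤ α⁻¹ := inv_anti₀ h0 hα2
    have h2 : Real.exp (-Real.pi) ≤ Real.exp (-Real.pi * (α⁻¹ * s) ^ 2) := by
      apply Real.exp_le_exp.mpr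
      have hsa : |s| ≤ α := le_trans (by rw [hb]; linarith : |s| ≤ b) hα1.le
      have habs : |α⁻¹ * s| ≤ 1 := by
        rw [abs_mul, abs_inv, abs_of_pos h0]
        calc α⁻¹ * |s| ≤ α⁻¹ * α := mul_le_mul_of_nonneg_left hsa (inv_nonneg.mpr h0.le)
          _ = 1 := inv_mul_cancel₀ (ne_of_gt h0)
      have hsq : (α⁻¹ * s) ^ 2 ≤ 1 := by
        have := abs_le.mp habs
        nlinarith
      nlinarith [Real.pi_pos]
    have h3 : (2*b) ^ (-lam) ≤ α ^ (-lam) :=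
      Real.rpow_le_rpow_of_nonpos h0 hα2 (neg_nonpos.mpr hlam.le)
    calc c ≤ α⁻¹ * Real.exp (-Real.pi * (α⁻¹ * s) ^ 2) * (2*b) ^ (-lam) := by
          rw [hc]
          apply mul_le_mul_of_nonneg_right _ (Real.rpow_nonneg (by linarith) _)
          exact mul_le_mul h1 h2 (Real.exp_pos _).le (inv_nonneg.mpr h0.le)
      _ ≤ f α := by
          apply mul_le_mul_of_nonneg_left h3
          positivity
  -- put it together
  have hcb : c * b = Real.exp (-Real.pi) * 2⁻¹ * (2:ℝ) ^ (-lam) * b ^ (-lam) := by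
    rw [hc, Real.mul_rpow (by norm_num) hb0.le]
    field_simp
  have hkey : Real.exp (-Real.pi) * 2⁻¹ * (2:ℝ) ^ (-lam) * b ^ (-lam)
      ≤ ∫ α in Set.Ioi (1:ℝ), f α := by
    rw [← hcb]; exact le_trans hstep2 hstep1
  have hCpos : (0:ℝ) < 2 ^ (1 + lam) * Real.exp Real.pi := by positivity
  have := mul_le_mul_of_nonneg_left hkey hCpos.le
  refine le_trans (le_of_eq ?_) this
  have h2l : (2:ℝ) ^ lam * (2:ℝ) ^ (-lam) = 1 := by
    rw [← Real.rpow_add two_pos]; simp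
  have hee : Real.exp Real.pi * Real.exp (-Real.pi) = 1 := by
    rw [← Real.exp_add]; simp
  have hone : (2:ℝ) ^ (1 + lam) * Real.exp Real.pi *
      (Real.exp (-Real.pi) * 2⁻¹ * (2:ℝ) ^ (-lam)) = 1 := by
    rw [Real.rpow_add two_pos 1 lam, Real.rpow_one]
    calc 2 * (2:ℝ) ^ lam * Real.exp Real.pi * (Real.exp (-Real.pi) * 2⁻¹ * 2 ^ (-lam))
        = (2 * 2⁻¹) * ((2:ℝ) ^ lam * 2 ^ (-lam)) *
            (Real.exp Real.pi * Real.exp (-Real.pi)) := by ring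
      _ = 1 := by rw [h2l, hee]; norm_num
  calc b ^ (-lam) = (2 ^ (1 + lam) * Real.exp Real.pi *
        (Real.exp (-Real.pi) * 2⁻¹ * (2:ℝ) ^ (-lam))) * b ^ (-lam) := by
        rw [hone, one_mul]
    _ = 2 ^ (1 + lam) * Real.exp Real.pi *
        (Real.exp (-Real.pi) * 2⁻¹ * 2 ^ (-lam) * b ^ (-lam)) := by ring
end

section
/- There is an absolute finite constant C such that the following holds. Let i ∈ ℤ and let a : [2^i, 2^{i+1}] → ℝ be continuously differentiable. Then for every m ∈ ℕ and all 2^i ≤ t₀ < t₁ < ⋯ < t_m ≤ 2^{i+1}: (i) Σ_{j=1}^{m} |a(t_j) − a(t_{j-1})|² ≤ C (∫_{2^i}^{2^{i+1}} a(t)² dt/t)^{1/2} (∫_{2^i}^{2^{i+1}} (t a'(t))² dt/t)^{1/2}, and (ii) Σ_{j=1}^{m} |a(t_j) − a(t_{j-1})|² ≤ ∫_{2^i}^{2^{i+1}} (t a'(t))² dt/t. -/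
open MeasureTheory
open scoped ENNReal NNReal

namespace AppendixVariationAux

open Set intervalIntegral

/-- Integrability from continuity on an ambient interval. -/
lemma contOn_ii {α β x y : ℝ} {g : ℝ → ℝ} (hg : ContinuousOn g (Icc α β))
    (hx : x ∈ Icc α β) (hy : y ∈ Icc α β) (hxy : x ≤ y) :
    IntervalIntegrable g volume x y := by
  apply ContinuousOn.intervalIntegrable
  rw [uIcc_of_le hxy]
  exact hg.mono (Icc_subset_Icc hx.1 hy.2)

/-- Cauchy–Schwarz for interval integrals of continuous functions. -/
lemma cs_sq {c d : ℝ} (hcd : c < d) {g : ℝ → ℝ} (hg : ContinuousOn g (Icc c d)) :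
    (∫ x in c..d, g x) ^ 2 ≤ (d - c) * ∫ x in c..d, (g x) ^ 2 := by
  have hm : c ∈ Icc c d := ⟨le_rfl, hcd.le⟩
  have hM : d ∈ Icc c d := ⟨hcd.le, le_rfl⟩
  have hgi : IntervalIntegrable g volume c d := contOn_ii hg hm hM hcd.le
  have hg2i : IntervalIntegrable (fun x => (g x) ^ 2) volume c d :=
    contOn_ii (hg.pow 2) hm hM hcd.le
  set I1 : ℝ := ∫ x in c..d, g x with hI1
  set I2 : ℝ := ∫ x in c..d, (g x) ^ 2 with hI2
  set μ : ℝ := I1 / (d - c) with hμ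
  have h0 : 0 ≤ ∫ x in c..d, (g x - μ) ^ 2 :=
    intervalIntegral.integral_nonneg hcd.le fun x _ => sq_nonneg _
  have hexp : (∫ x in c..d, (g x - μ) ^ 2) = I2 - 2 * μ * I1 + μ ^ 2 * (d - c) := by
    have hfun : (fun x => (g x - μ) ^ 2) = fun x => ((g x) ^ 2 - (2 * μ) * g x) + μ ^ 2 := by
      funext x; ring
    rw [hfun, intervalIntegral.integral_add (hg2i.sub (hgi.const_mul _))
        intervalIntegrable_const,
      intervalIntegral.integral_sub hg2i (hgi.const_mul _),
      intervalIntegral.integral_const_mul, intervalIntegral.integral_const, smul_eq_mul]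
    ring
  have hL : 0 < d - c := by linarith
  have h1 : 0 ≤ I2 - 2 * μ * I1 + μ ^ 2 * (d - c) := hexp ▸ h0
  have hμd : μ * (d - c) = I1 := by
    rw [hμ]; exact div_mul_cancel₀ _ (ne_of_gt hL)
  nlinarith [mul_nonneg hL.le h1, sq_nonneg (I1 - μ * (d - c))]

section Main

variable {α β : ℝ} {f f' : ℝ → ℝ}

/-- Fundamental theorem of calculus for a `C¹` function on `[α, β]`. -/
lemma ftc (hf : ContinuousOn f (Icc α β))
    (hder : ∀ x ∈ Icc α β, HasDerivWithinAt f (f' x) (Icc α β) x)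
    (hf' : ContinuousOn f' (Icc α β))
    {x y : ℝ} (hx : x ∈ Icc α β) (hy : y ∈ Icc α β) (hxy : x ≤ y) :
    ∫ u in x..y, f' u = f y - f x := by
  apply intervalIntegral.integral_eq_sub_of_hasDeriv_right_of_le hxy
    (hf.mono (Icc_subset_Icc hx.1 hy.2))
  · intro z hz
    have hz' : z ∈ Ioo α β := ⟨lt_of_le_of_lt hx.1 hz.1, lt_of_lt_of_le hz.2 hy.2⟩
    exact ((hder z (Ioo_subset_Icc_self hz')).hasDerivAt
      (Icc_mem_nhds hz'.1 hz'.2)).hasDerivWithinAt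
  · exact contOn_ii hf' hx hy hxy

/-- Agmon-type bound on a window `[p, q] ⊆ [α, β]`. -/
lemma window (hf : ContinuousOn f (Icc α β))
    (hder : ∀ x ∈ Icc α β, HasDerivWithinAt f (f' x) (Icc α β) x)
    (hf' : ContinuousOn f' (Icc α β))
    {p q : ℝ} (hpq : p < q) (hsub : Icc p q ⊆ Icc α β) {s : ℝ} (hs : s ∈ Icc p q) :
    (f s) ^ 2 ≤ 2 / (q - p) * (∫ x in p..q, (f x) ^ 2)
      + 2 * (q - p) * ∫ x in p..q, (f' x) ^ 2 := by
  have hq : 0 < q - p := by linarith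
  obtain ⟨u, hu, hmin⟩ := isCompact_Icc.exists_isMinOn (nonempty_Icc.2 hpq.le)
    ((hf.mono hsub).pow 2)
  have habs'int : IntervalIntegrable (fun x => |f' x|) volume p q :=
    contOn_ii hf'.abs (hsub (left_mem_Icc.2 hpq.le)) (hsub (right_mem_Icc.2 hpq.le)) hpq.le
  -- |f s - f u| ≤ ∫_{p..q} |f'|
  have habs : |f s - f u| ≤ ∫ x in p..q, |f' x| := by
    have key : ∀ x y : ℝ, x ∈ Icc p q → y ∈ Icc p q → x ≤ y →
        |f y - f x| ≤ ∫ z in p..q, |f' z| := by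
      intro x y hx hy hxy
      rw [← ftc hf hder hf' (hsub hx) (hsub hy) hxy]
      calc |∫ u in x..y, f' u| ≤ ∫ u in x..y, |f' u| :=
            intervalIntegral.abs_integral_le_integral_abs hxy
        _ ≤ ∫ z in p..q, |f' z| := by
            apply intervalIntegral.integral_mono_interval hx.1 hxy hy.2
            · filter_upwards with z using abs_nonneg _
            · exact habs'int
    rcases le_total u s with h' | h'
    · exact key u s hu hs h'
    · rw [abs_sub_comm]; exact key s u hs hu h'
  have h1 : (∫ x in p..q, |f' x|) ^ 2 ≤ (q - p) * ∫ x in p..q, (f' x) ^ 2 := by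
    have := cs_sq hpq (g := fun x => |f' x|) (hf'.abs.mono hsub)
    simpa only [sq_abs] using this
  have h2 : (f u) ^ 2 * (q - p) ≤ ∫ x in p..q, (f x) ^ 2 := by
    have hc : IntervalIntegrable (fun _ : ℝ => (f u) ^ 2) volume p q :=
      intervalIntegrable_const
    have hi : IntervalIntegrable (fun x => (f x) ^ 2) volume p q :=
      contOn_ii ((hf.mono hsub).pow 2) (left_mem_Icc.2 hpq.le) (right_mem_Icc.2 hpq.le) hpq.le
    have := intervalIntegral.integral_mono_on (μ := volume) hpq.le hc hi
      (fun x hx => hmin hx)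
    simpa [intervalIntegral.integral_const, smul_eq_mul, mul_comm] using this
  have h3 : (f s - f u) ^ 2 ≤ (∫ x in p..q, |f' x|) ^ 2 := by
    rw [← sq_abs (f s - f u)]
    exact pow_le_pow_left₀ (abs_nonneg _) habs 2
  have h4 : (f s) ^ 2 ≤ 2 * (f u) ^ 2 + 2 * (f s - f u) ^ 2 := by
    nlinarith [sq_nonneg (f u - (f s - f u))]
  have h2' : (f u) ^ 2 ≤ (∫ x in p..q, (f x) ^ 2) / (q - p) := (le_div_iff₀ hq).mpr h2
  have hrw : 2 / (q - p) * (∫ x in p..q, (f x) ^ 2)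
      = 2 * ((∫ x in p..q, (f x) ^ 2) / (q - p)) := by ring
  rw [hrw]
  linarith [h3, h4, h2', h1]

/-- Per-interval bound at scale `h`. -/
lemma perj (hf : ContinuousOn f (Icc α β))
    (hder : ∀ x ∈ Icc α β, HasDerivWithinAt f (f' x) (Icc α β) x)
    (hf' : ContinuousOn f' (Icc α β))
    {c d h : ℝ} (hcd : c < d) (hsub : Icc c d ⊆ Icc α β) (hh : 0 < h) :
    (f d - f c) ^ 2 ≤ 8 / h * (∫ x in c..d, (f x) ^ 2)
      + 9 * h * ∫ x in c..d, (f' x) ^ 2 := by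
  have hcm : c ∈ Icc α β := hsub (left_mem_Icc.2 hcd.le)
  have hdm : d ∈ Icc α β := hsub (right_mem_Icc.2 hcd.le)
  have hX0 : 0 ≤ ∫ x in c..d, (f x) ^ 2 :=
    intervalIntegral.integral_nonneg hcd.le fun x _ => sq_nonneg _
  have hY0 : 0 ≤ ∫ x in c..d, (f' x) ^ 2 :=
    intervalIntegral.integral_nonneg hcd.le fun x _ => sq_nonneg _
  have hfi2 : IntervalIntegrable (fun x => (f x) ^ 2) volume c d :=
    contOn_ii (hf.pow 2) hcm hdm hcd.le
  have hfi2' : IntervalIntegrable (fun x => (f' x) ^ 2) volume c d :=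
    contOn_ii (hf'.pow 2) hcm hdm hcd.le
  rcases le_total (d - c) h with hshort | hlong
  · -- short interval
    have hftc : ∫ x in c..d, f' x = f d - f c := ftc hf hder hf' hcm hdm hcd.le
    have hcs : (∫ x in c..d, f' x) ^ 2 ≤ (d - c) * ∫ x in c..d, (f' x) ^ 2 :=
      cs_sq hcd (hf'.mono hsub)
    rw [← hftc]
    have h8 : 0 ≤ 8 / h * (∫ x in c..d, (f x) ^ 2) := by positivity
    nlinarith [mul_le_mul_of_nonneg_right hshort hY0]
  · -- long interval: use windows of length h at both endpoints
    have hc1 : c + h ≤ d := by linarith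
    have hd1 : c ≤ d - h := by linarith
    have hpq1 : c < c + h := by linarith
    have hpq2 : d - h < d := by linarith
    have hsub1 : Icc c (c + h) ⊆ Icc α β := (Icc_subset_Icc le_rfl hc1).trans hsub
    have hsub2 : Icc (d - h) d ⊆ Icc α β := (Icc_subset_Icc hd1 le_rfl).trans hsub
    have w1 := window hf hder hf' hpq1 hsub1 (left_mem_Icc.2 hpq1.le)
    have w2 := window hf hder hf' hpq2 hsub2 (right_mem_Icc.2 hpq2.le)
    have e1 : c + h - c = h := by ring
    have e2 : d - (d - h) = h := by ring
    rw [e1] at w1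
    rw [e2] at w2
    -- monotonicity of the four window integrals
    have sqf_nonneg : (0 : ℝ → ℝ) ≤ᵐ[volume.restrict (Set.Ioc c d)] fun x => (f x) ^ 2 := by
      filter_upwards with x using sq_nonneg _
    have sqf'_nonneg : (0 : ℝ → ℝ) ≤ᵐ[volume.restrict (Set.Ioc c d)] fun x => (f' x) ^ 2 := by
      filter_upwards with x using sq_nonneg _
    have m1 : (∫ x in c..c + h, (f x) ^ 2) ≤ ∫ x in c..d, (f x) ^ 2 :=
      intervalIntegral.integral_mono_interval le_rfl hpq1.le hc1 sqf_nonneg hfi2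
    have m2 : (∫ x in d - h..d, (f x) ^ 2) ≤ ∫ x in c..d, (f x) ^ 2 :=
      intervalIntegral.integral_mono_interval hd1 hpq2.le le_rfl sqf_nonneg hfi2
    have m3 : (∫ x in c..c + h, (f' x) ^ 2) ≤ ∫ x in c..d, (f' x) ^ 2 :=
      intervalIntegral.integral_mono_interval le_rfl hpq1.le hc1 sqf'_nonneg hfi2'
    have m4 : (∫ x in d - h..d, (f' x) ^ 2) ≤ ∫ x in c..d, (f' x) ^ 2 :=
      intervalIntegral.integral_mono_interval hd1 hpq2.le le_rfl sqf'_nonneg hfi2'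
    have h2h : (0:ℝ) ≤ 2 / h := by positivity
    have hsq : (f d - f c) ^ 2 ≤ 2 * (f c) ^ 2 + 2 * (f d) ^ 2 := by
      nlinarith [sq_nonneg (f c + f d)]
    have c1 : 2 / h * (∫ x in c..c + h, (f x) ^ 2) ≤ 2 / h * ∫ x in c..d, (f x) ^ 2 :=
      mul_le_mul_of_nonneg_left m1 h2h
    have c2 : 2 / h * (∫ x in d - h..d, (f x) ^ 2) ≤ 2 / h * ∫ x in c..d, (f x) ^ 2 :=
      mul_le_mul_of_nonneg_left m2 h2h
    have c3 : 2 * h * (∫ x in c..c + h, (f' x) ^ 2) ≤ 2 * h * ∫ x in c..d, (f' x) ^ 2 :=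
      mul_le_mul_of_nonneg_left m3 (by positivity)
    have c4 : 2 * h * (∫ x in d - h..d, (f' x) ^ 2) ≤ 2 * h * ∫ x in c..d, (f' x) ^ 2 :=
      mul_le_mul_of_nonneg_left m4 (by positivity)
    have hhY : 0 ≤ h * ∫ x in c..d, (f' x) ^ 2 := mul_nonneg hh.le hY0
    have goal8 : 8 / h * (∫ x in c..d, (f x) ^ 2) = 4 * (2 / h * ∫ x in c..d, (f x) ^ 2) := by
      ring
    rw [goal8]
    nlinarith [w1, w2, c1, c2, c3, c4, hsq, hhY]

/-- Monotonicity of the partition points. -/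
lemma t_mono {m : ℕ} {t : ℕ → ℝ} (hinc : ∀ j, j < m → t j < t (j + 1)) :
    ∀ j k, j ≤ k → k ≤ m → t j ≤ t k := by
  intro j k hjk hkm
  induction k with
  | zero => simp_all
  | succ n ih =>
    rcases Nat.lt_or_ge j (n + 1) with h' | h'
    · exact (ih (by omega) (by omega)).trans (hinc n (by omega)).le
    · have : j = n + 1 := by omega
      rw [this]

/-- Scale-`h` bound for the full sum. -/
lemma sum_bound (hαβ : α < β) (hf : ContinuousOn f (Icc α β))
    (hder : ∀ x ∈ Icc α β, HasDerivWithinAt f (f' x) (Icc α β) x)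
    (hf' : ContinuousOn f' (Icc α β))
    {m : ℕ} {t : ℕ → ℝ} (ht : ∀ j, j ≤ m → t j ∈ Icc α β)
    (hinc : ∀ j, j < m → t j < t (j + 1)) {h : ℝ} (hh : 0 < h) :
    ∑ j ∈ Finset.range m, (f (t (j + 1)) - f (t j)) ^ 2
      ≤ 8 / h * (∫ x in α..β, (f x) ^ 2) + 9 * h * ∫ x in α..β, (f' x) ^ 2 := by
  have step : ∀ j ∈ Finset.range m,
      (f (t (j + 1)) - f (t j)) ^ 2
        ≤ 8 / h * (∫ x in t j..t (j + 1), (f x) ^ 2)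
          + 9 * h * ∫ x in t j..t (j + 1), (f' x) ^ 2 := by
    intro j hj
    rw [Finset.mem_range] at hj
    have hcd : t j < t (j + 1) := hinc j hj
    have hsub : Icc (t j) (t (j + 1)) ⊆ Icc α β :=
      Icc_subset_Icc (ht j (by omega)).1 (ht (j + 1) (by omega)).2
    exact perj hf hder hf' hcd hsub hh
  calc ∑ j ∈ Finset.range m, (f (t (j + 1)) - f (t j)) ^ 2
      ≤ ∑ j ∈ Finset.range m, (8 / h * (∫ x in t j..t (j + 1), (f x) ^ 2)
          + 9 * h * ∫ x in t j..t (j + 1), (f' x) ^ 2) := Finset.sum_le_sum step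
    _ = 8 / h * (∑ j ∈ Finset.range m, ∫ x in t j..t (j + 1), (f x) ^ 2)
        + 9 * h * ∑ j ∈ Finset.range m, ∫ x in t j..t (j + 1), (f' x) ^ 2 := by
        rw [Finset.sum_add_distrib, Finset.mul_sum, Finset.mul_sum]
    _ ≤ 8 / h * (∫ x in α..β, (f x) ^ 2) + 9 * h * ∫ x in α..β, (f' x) ^ 2 := by
        have hsum : ∀ (g : ℝ → ℝ), ContinuousOn g (Icc α β) → (∀ x, 0 ≤ g x) →
            (∑ j ∈ Finset.range m, ∫ x in t j..t (j + 1), g x) ≤ ∫ x in α..β, g x := by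
          intro g hg hg0
          have hint : ∀ k < m, IntervalIntegrable g volume (t k) (t (k + 1)) := by
            intro k hk
            exact contOn_ii hg (ht k (by omega)) (ht (k + 1) (by omega)) (hinc k hk).le
          rw [intervalIntegral.sum_integral_adjacent_intervals hint]
          rcases Nat.eq_zero_or_pos m with hm | hm
          · subst hm
            simp only [intervalIntegral.integral_same]
            exact intervalIntegral.integral_nonneg hαβ.le fun x _ => hg0 x
          · apply intervalIntegral.integral_mono_interval (ht 0 (by omega)).1
              (t_mono hinc 0 m (by omega) le_rfl) (ht m le_rfl).2
            · filter_upwards with x using hg0 x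
            · exact contOn_ii hg (left_mem_Icc.2 hαβ.le) (right_mem_Icc.2 hαβ.le) hαβ.le
        have hs1 := hsum (fun x => (f x) ^ 2) (hf.pow 2) (fun x => sq_nonneg _)
        have hs2 := hsum (fun x => (f' x) ^ 2) (hf'.pow 2) (fun x => sq_nonneg _)
        have h8 : (0:ℝ) ≤ 8 / h := by positivity
        have h9 : (0:ℝ) ≤ 9 * h := by positivity
        exact add_le_add (mul_le_mul_of_nonneg_left hs1 h8)
          (mul_le_mul_of_nonneg_left hs2 h9)

/-- Main unweighted estimate: the quadratic variation is bounded by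
`17 ‖f‖₂ ‖f'‖₂`. -/
lemma key (hαβ : α < β) (hf : ContinuousOn f (Icc α β))
    (hder : ∀ x ∈ Icc α β, HasDerivWithinAt f (f' x) (Icc α β) x)
    (hf' : ContinuousOn f' (Icc α β))
    {m : ℕ} {t : ℕ → ℝ} (ht : ∀ j, j ≤ m → t j ∈ Icc α β)
    (hinc : ∀ j, j < m → t j < t (j + 1)) :
    ∑ j ∈ Finset.range m, (f (t (j + 1)) - f (t j)) ^ 2
      ≤ 17 * Real.sqrt (∫ x in α..β, (f x) ^ 2)
          * Real.sqrt (∫ x in α..β, (f' x) ^ 2) := by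
  set X : ℝ := ∫ x in α..β, (f x) ^ 2 with hX
  set Y : ℝ := ∫ x in α..β, (f' x) ^ 2 with hY
  set S : ℝ := ∑ j ∈ Finset.range m, (f (t (j + 1)) - f (t j)) ^ 2 with hS
  have hX0 : 0 ≤ X := intervalIntegral.integral_nonneg hαβ.le fun x _ => sq_nonneg _
  have hY0 : 0 ≤ Y := intervalIntegral.integral_nonneg hαβ.le fun x _ => sq_nonneg _
  have hA : ∀ h : ℝ, 0 < h → S ≤ 8 / h * X + 9 * h * Y := fun h hh =>
    sum_bound hαβ hf hder hf' ht hinc hh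
  rcases eq_or_lt_of_le hX0 with hXz | hXp
  · -- X = 0
    have hrhs : 17 * Real.sqrt X * Real.sqrt Y = 0 := by
      rw [← hXz, Real.sqrt_zero]; ring
    rw [hrhs]
    by_contra hcon
    push_neg at hcon
    rcases eq_or_lt_of_le hY0 with hYz | hYp
    · have := hA 1 one_pos
      rw [← hXz, ← hYz] at this
      simp at this
      linarith
    · have hh : 0 < S / (18 * Y) := div_pos hcon (by positivity)
      have := hA _ hh
      rw [← hXz] at this
      have : S ≤ 9 * (S / (18 * Y)) * Y := by linarith [this]
      have hYne : Y ≠ 0 := ne_of_gt hYp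
      have heq : 9 * (S / (18 * Y)) * Y = S / 2 := by field_simp; ring
      rw [heq] at this
      linarith
  · rcases eq_or_lt_of_le hY0 with hYz | hYp
    · -- Y = 0
      have hrhs : 17 * Real.sqrt X * Real.sqrt Y = 0 := by
        rw [← hYz, Real.sqrt_zero]; ring
      rw [hrhs]
      by_contra hcon
      push_neg at hcon
      have hh : 0 < 16 * X / S := by positivity
      have := hA _ hh
      rw [← hYz] at this
      have : S ≤ 8 / (16 * X / S) * X := by linarith [this]
      have heq : 8 / (16 * X / S) * X = S / 2 := by
        field_simp
        ring
      rw [heq] at this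
      linarith
    · -- X > 0 and Y > 0
      have hsX : 0 < Real.sqrt X := Real.sqrt_pos.2 hXp
      have hsY : 0 < Real.sqrt Y := Real.sqrt_pos.2 hYp
      have hh : 0 < Real.sqrt X / Real.sqrt Y := div_pos hsX hsY
      have hbound := hA _ hh
      have eX : Real.sqrt X * Real.sqrt X = X := Real.mul_self_sqrt hX0
      have eY : Real.sqrt Y * Real.sqrt Y = Y := Real.mul_self_sqrt hY0
      have heq : 8 / (Real.sqrt X / Real.sqrt Y) * X
          + 9 * (Real.sqrt X / Real.sqrt Y) * Y
          = 17 * Real.sqrt X * Real.sqrt Y := by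
        field_simp
        nlinarith [eX, eY]
      rw [heq] at hbound
      exact hbound

end Main

end AppendixVariationAux

/-- **Appendix lemma (Lemma 13).**
There is an absolute finite constant `C` such that for every `i ∈ ℤ`, every
continuously differentiable `a : [2^i, 2^{i+1}] → ℝ`, and all
`2^i ≤ t₀ < t₁ < ⋯ < t_m ≤ 2^{i+1}`:
(i) `∑_{j=1}^m |a(t_j) - a(t_{j-1})|²
      ≤ C (∫_{2^i}^{2^{i+1}} a(t)² dt/t)^{1/2} (∫_{2^i}^{2^{i+1}} (t a'(t))² dt/t)^{1/2}`,
(ii) `∑_{j=1}^m |a(t_j) - a(t_{j-1})|² ≤ ∫_{2^i}^{2^{i+1}} (t a'(t))² dt/t`. -/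
theorem appendix_variation_lemma :
    ∃ C : ℝ, ∀ (i : ℤ) (a : ℝ → ℝ),
      ContDiffOn ℝ 1 a (Set.Icc ((2 : ℝ) ^ i) ((2 : ℝ) ^ (i + 1))) →
      ∀ (m : ℕ) (t : ℕ → ℝ),
        (∀ j, j ≤ m → t j ∈ Set.Icc ((2 : ℝ) ^ i) ((2 : ℝ) ^ (i + 1))) →
        (∀ j, j < m → t j < t (j + 1)) →
        (∑ j ∈ Finset.range m, (a (t (j + 1)) - a (t j)) ^ 2
            ≤ C *
              Real.sqrt (∫ τ in Set.Icc ((2 : ℝ) ^ i) ((2 : ℝ) ^ (i + 1)), (a τ) ^ 2 / τ) *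
              Real.sqrt (∫ τ in Set.Icc ((2 : ℝ) ^ i) ((2 : ℝ) ^ (i + 1)),
                (τ * derivWithin a (Set.Icc ((2 : ℝ) ^ i) ((2 : ℝ) ^ (i + 1))) τ) ^ 2 / τ)) ∧
        (∑ j ∈ Finset.range m, (a (t (j + 1)) - a (t j)) ^ 2
            ≤ ∫ τ in Set.Icc ((2 : ℝ) ^ i) ((2 : ℝ) ^ (i + 1)),
                (τ * derivWithin a (Set.Icc ((2 : ℝ) ^ i) ((2 : ℝ) ^ (i + 1))) τ) ^ 2 / τ) := by
  classical
  refine ⟨26, ?_⟩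
  intro i a ha m t ht hinc
  open AppendixVariationAux Set in
  set L : ℝ := (2 : ℝ) ^ i with hLdef
  set U : ℝ := (2 : ℝ) ^ (i + 1) with hUdef
  have hL : 0 < L := zpow_pos (by norm_num) i
  have hU2 : U = 2 * L := by
    rw [hUdef, hLdef, zpow_add_one₀ (two_ne_zero)]
    ring
  have hαβ : L < U := by rw [hU2]; linarith
  set f' : ℝ → ℝ := derivWithin a (Icc L U) with hf'def
  have hf : ContinuousOn a (Icc L U) := ha.continuousOn
  have hdiff : DifferentiableOn ℝ a (Icc L U) := ha.differentiableOn one_ne_zero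
  have hder : ∀ x ∈ Icc L U, HasDerivWithinAt a (f' x) (Icc L U) x := fun x hx =>
    (hdiff x hx).hasDerivWithinAt
  have hf' : ContinuousOn f' (Icc L U) :=
    ha.continuousOn_derivWithin (uniqueDiffOn_Icc hαβ) le_rfl
  -- set integrals as interval integrals
  have hAeq : (∫ τ in Icc L U, (a τ) ^ 2 / τ) = ∫ x in L..U, (a x) ^ 2 / x := by
    rw [MeasureTheory.integral_Icc_eq_integral_Ioc, ← intervalIntegral.integral_of_le hαβ.le]
  have hBeq : (∫ τ in Icc L U, (τ * f' τ) ^ 2 / τ) = ∫ x in L..U, x * (f' x) ^ 2 := by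
    rw [MeasureTheory.integral_Icc_eq_integral_Ioc, ← intervalIntegral.integral_of_le hαβ.le]
    apply intervalIntegral.integral_congr
    intro x hx
    rw [uIcc_of_le hαβ.le] at hx
    have hx0 : x ≠ 0 := ne_of_gt (lt_of_lt_of_le hL hx.1)
    field_simp
  have hginteg : ContinuousOn (fun x => x * (f' x) ^ 2) (Icc L U) :=
    continuousOn_id.mul (hf'.pow 2)
  constructor
  · -- part (i)
    have hkey := key hαβ hf hder hf' ht hinc
    set X : ℝ := ∫ x in L..U, (a x) ^ 2 with hX
    set Y : ℝ := ∫ x in L..U, (f' x) ^ 2 with hY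
    set A : ℝ := ∫ x in L..U, (a x) ^ 2 / x with hA
    set B : ℝ := ∫ x in L..U, x * (f' x) ^ 2 with hB
    have hA0 : 0 ≤ A := intervalIntegral.integral_nonneg hαβ.le fun x hx => by
      have : 0 < x := lt_of_lt_of_le hL hx.1
      positivity
    have hB0 : 0 ≤ B := intervalIntegral.integral_nonneg hαβ.le fun x hx => by
      have : 0 < x := lt_of_lt_of_le hL hx.1
      positivity
    -- X ≤ 2L * A
    have hAcont : ContinuousOn (fun x => (a x) ^ 2 / x) (Icc L U) :=
      ContinuousOn.div (hf.pow 2) continuousOn_id fun x hx =>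
        ne_of_gt (lt_of_lt_of_le hL hx.1)
    have hXA : X ≤ 2 * L * A := by
      have := intervalIntegral.integral_mono_on (μ := volume) hαβ.le
        (contOn_ii (hf.pow 2) (left_mem_Icc.2 hαβ.le) (right_mem_Icc.2 hαβ.le) hαβ.le)
        ((contOn_ii hAcont (left_mem_Icc.2 hαβ.le)
          (right_mem_Icc.2 hαβ.le) hαβ.le).const_mul (2 * L))
        (fun x hx => ?_)
      · rw [intervalIntegral.integral_const_mul] at this
        exact this
      · have hx0 : 0 < x := lt_of_lt_of_le hL hx.1
        have hx2 : x ≤ 2 * L := by rw [← hU2]; exact hx.2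
        rw [show (2 : ℝ) * L * ((a x) ^ 2 / x) = (2 * L * (a x) ^ 2) / x by ring,
          le_div_iff₀ hx0]
        simp only [Pi.pow_apply]
        nlinarith [sq_nonneg (a x)]
    -- Y ≤ (1/L) * B
    have hYB : Y ≤ (1 / L) * B := by
      have := intervalIntegral.integral_mono_on (μ := volume) hαβ.le
        (contOn_ii (hf'.pow 2) (left_mem_Icc.2 hαβ.le) (right_mem_Icc.2 hαβ.le) hαβ.le)
        ((contOn_ii hginteg (left_mem_Icc.2 hαβ.le) (right_mem_Icc.2 hαβ.le)
          hαβ.le).const_mul (1 / L))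
        (fun x hx => ?_)
      · rw [intervalIntegral.integral_const_mul] at this
        exact this
      · have hx1 : L ≤ x := hx.1
        have h1 : (f' x) ^ 2 * L ≤ (f' x) ^ 2 * x :=
          mul_le_mul_of_nonneg_left hx1 (sq_nonneg _)
        rw [show (1 : ℝ) / L * (x * (f' x) ^ 2) = (x * (f' x) ^ 2) / L by ring,
          le_div_iff₀ hL]
        simp only [Pi.pow_apply]
        nlinarith
    have hsX : Real.sqrt X ≤ Real.sqrt (2 * L) * Real.sqrt A := by
      rw [← Real.sqrt_mul (by positivity)]
      exact Real.sqrt_le_sqrt hXA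
    have hsY : Real.sqrt Y ≤ Real.sqrt (1 / L) * Real.sqrt B := by
      rw [← Real.sqrt_mul (by positivity)]
      exact Real.sqrt_le_sqrt hYB
    have hchain : ∑ j ∈ Finset.range m, (a (t (j + 1)) - a (t j)) ^ 2
        ≤ 17 * (Real.sqrt (2 * L) * Real.sqrt A) * (Real.sqrt (1 / L) * Real.sqrt B) := by
      calc ∑ j ∈ Finset.range m, (a (t (j + 1)) - a (t j)) ^ 2
          ≤ 17 * Real.sqrt X * Real.sqrt Y := hkey
        _ ≤ 17 * (Real.sqrt (2 * L) * Real.sqrt A) * (Real.sqrt (1 / L) * Real.sqrt B) := by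
            gcongr <;> positivity
    have hsqrt2 : Real.sqrt (2 * L) * Real.sqrt (1 / L) = Real.sqrt 2 := by
      rw [← Real.sqrt_mul (by positivity)]
      congr 1
      field_simp
    have hs2le : Real.sqrt 2 ≤ 1.5 := by
      nlinarith [Real.sq_sqrt (show (0:ℝ) ≤ 2 by norm_num), Real.sqrt_nonneg 2]
    have hfin : 17 * (Real.sqrt (2 * L) * Real.sqrt A) * (Real.sqrt (1 / L) * Real.sqrt B)
        ≤ 26 * Real.sqrt A * Real.sqrt B := by
      have hre : 17 * (Real.sqrt (2 * L) * Real.sqrt A) * (Real.sqrt (1 / L) * Real.sqrt B)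
          = (17 * Real.sqrt 2) * (Real.sqrt A * Real.sqrt B) := by
        rw [← hsqrt2]; ring
      rw [hre, show (26 : ℝ) * Real.sqrt A * Real.sqrt B
          = 26 * (Real.sqrt A * Real.sqrt B) by ring]
      apply mul_le_mul_of_nonneg_right (by linarith) (by positivity)
    rw [hAeq, hBeq]
    exact hchain.trans hfin
  · -- part (ii)
    rw [hBeq]
    have step : ∀ j ∈ Finset.range m,
        (a (t (j + 1)) - a (t j)) ^ 2 ≤ ∫ x in t j..t (j + 1), x * (f' x) ^ 2 := by
      intro j hj
      rw [Finset.mem_range] at hj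
      have hcd : t j < t (j + 1) := hinc j hj
      have hcm : t j ∈ Icc L U := ht j (by omega)
      have hdm : t (j + 1) ∈ Icc L U := ht (j + 1) (by omega)
      have hftc : ∫ x in t j..t (j + 1), f' x = a (t (j + 1)) - a (t j) :=
        ftc hf hder hf' hcm hdm hcd.le
      have hcs : (∫ x in t j..t (j + 1), f' x) ^ 2
          ≤ (t (j + 1) - t j) * ∫ x in t j..t (j + 1), (f' x) ^ 2 :=
        cs_sq hcd (hf'.mono (Icc_subset_Icc hcm.1 hdm.2))
      rw [← hftc]
      refine hcs.trans ?_
      rw [← intervalIntegral.integral_const_mul]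
      apply intervalIntegral.integral_mono_on (μ := volume) hcd.le
        ((contOn_ii (hf'.pow 2) hcm hdm hcd.le).const_mul _)
        (contOn_ii hginteg hcm hdm hcd.le)
      intro x hx
      have hδ : t (j + 1) - t j ≤ x := by
        have h1 : t (j + 1) ≤ U := hdm.2
        have h2 : L ≤ t j := hcm.1
        have h3 : L ≤ x := le_trans hcm.1 hx.1
        rw [hU2] at h1
        linarith
      exact mul_le_mul_of_nonneg_right hδ (sq_nonneg _)
    calc ∑ j ∈ Finset.range m, (a (t (j + 1)) - a (t j)) ^ 2
        ≤ ∑ j ∈ Finset.range m, ∫ x in t j..t (j + 1), x * (f' x) ^ 2 :=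
          Finset.sum_le_sum step
      _ ≤ ∫ x in L..U, x * (f' x) ^ 2 := by
          have hint : ∀ k < m, IntervalIntegrable (fun x => x * (f' x) ^ 2) volume
              (t k) (t (k + 1)) := fun k hk =>
            contOn_ii hginteg (ht k (by omega)) (ht (k + 1) (by omega)) (hinc k hk).le
          rw [intervalIntegral.sum_integral_adjacent_intervals hint]
          rcases Nat.eq_zero_or_pos m with hm | hm
          · subst hm
            simp only [intervalIntegral.integral_same]
            apply intervalIntegral.integral_nonneg hαβ.le
            intro x hx
            have : 0 < x := lt_of_lt_of_le hL hx.1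
            positivity
          · apply intervalIntegral.integral_mono_interval (ht 0 (by omega)).1
              (t_mono hinc 0 m (by omega) le_rfl) (ht m le_rfl).2
            · filter_upwards [ae_restrict_mem measurableSet_Ioc] with x hx
              have : 0 < x := lt_of_lt_of_le hL hx.1.le
              positivity
            · exact contOn_ii hginteg (left_mem_Icc.2 hαβ.le) (right_mem_Icc.2 hαβ.le) hαβ.le
end
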